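/- arXiv:1303.1840 — 6 statements merged into one kernel-verified Lean document; each statement's English description precedes it below -/
import Mathlib

section
/- For every integer k ≥ 3, the family ℛ_k = { {i, i+1 mod k} : i ∈ ℤ/kℤ } of rows of Tucker's matrix M_I of order k is a minimal non-C1P matrix: it does not have the consecutive-ones property, but every proper restriction (deleting at least one row or at least one column) has the consecutive-ones property. -/
/-- Two sets *overlap* if they intersect but neither is a subset of the other. -/
def Overlaps {α : Type*} [DecidableEq α] (A B : Finset α) : Prop :=
  (A ∩ B).Nonempty ∧ ¬ A ⊆ B ∧ ¬ B ⊆ A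

instance {α : Type*} [DecidableEq α] (A B : Finset α) : Decidable (Overlaps A B) :=
  inferInstanceAs (Decidable (_ ∧ _ ∧ _))

/-- The overlap graph of a family of sets. -/
def overlapGraph {α : Type*} [DecidableEq α] (𝓡 : Finset (Finset α)) :
    SimpleGraph {R // R ∈ 𝓡} where
  Adj A B := Overlaps A.1 B.1
  symm := by
    constructor
    rintro A B ⟨h1, h2, h3⟩
    exact ⟨by rwa [Finset.inter_comm], h3, h2⟩
  loopless := ⟨fun A h => h.2.1 le_rfl⟩

/-- A set `S` is *convex* (occupies consecutive positions) within the column set `U`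
under the position assignment `σ`. -/
def ConvexIn {α : Type*} (U : Finset α) (σ : α → ℕ) (S : Set α) : Prop :=
  ∀ x ∈ U, ∀ y ∈ U, ∀ z ∈ U, σ x ≤ σ y → σ y ≤ σ z → x ∈ S → z ∈ S → y ∈ S

/-- `σ` is a consecutive-ones ordering of the columns `U` for the family `𝓡`:
it linearly orders `U` (injectivity) and every member of `𝓡` is an interval of it. -/
def IsC1POrdering {α : Type*} (U : Finset α) (𝓡 : Finset (Finset α)) (σ : α → ℕ) : Prop :=
  Set.InjOn σ U ∧ ∀ R ∈ 𝓡, ConvexIn U σ (R : Set α)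

/-- The family `𝓡` of subsets of the column set `U` has the consecutive-ones property. -/
def HasC1P {α : Type*} (U : Finset α) (𝓡 : Finset (Finset α)) : Prop :=
  ∃ σ : α → ℕ, IsC1POrdering U 𝓡 σ

/-- `𝓡` is a minimal non-C1P matrix (Tucker matrix) over column set `U`. -/
def MinimalNonC1P {α : Type*} [DecidableEq α] (U : Finset α) (𝓡 : Finset (Finset α)) : Prop :=
  (∀ R ∈ 𝓡, R ⊆ U) ∧ ¬ HasC1P U 𝓡 ∧
    ∀ 𝓡' ⊆ 𝓡, ∀ U' ⊆ U, (𝓡' ≠ 𝓡 ∨ U' ≠ U) →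
      HasC1P U' (𝓡'.image (· ∩ U'))

private lemma zmod_val_succ {k : ℕ} (hk : 1 < k) (a : ZMod k) (h : a + 1 ≠ 0) :
    haveI : NeZero k := ⟨by omega⟩
    (a + 1).val = a.val + 1 := by
  haveI : NeZero k := ⟨by omega⟩
  haveI : Fact (1 < k) := ⟨hk⟩
  have hlt : a.val < k := ZMod.val_lt a
  have hne : a.val + 1 ≠ k := by
    intro hEq
    apply h
    have h0 : ((a.val + 1 : ℕ) : ZMod k) = 0 := by rw [hEq]; exact ZMod.natCast_self k
    push_cast at h0
    rwa [ZMod.natCast_zmod_val] at h0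
  rw [ZMod.val_add, ZMod.val_one, Nat.mod_eq_of_lt (by omega)]

private lemma convexIn_of {k : ℕ} [NeZero k] (U' : Finset (ZMod k)) (σ : ZMod k → ℕ)
    (hinj : Function.Injective σ) (S : Finset (ZMod k)) (i : ZMod k)
    (hS : (S : Set (ZMod k)) ⊆ {i, i + 1})
    (hcons : i ∈ S → i + 1 ∈ S → σ (i + 1) = σ i + 1) :
    ConvexIn U' σ (S : Set (ZMod k)) := by
  intro x hx y hy z hz hxy hyz hxS hzS
  by_cases hxz : x = z
  · subst hxz
    have : σ y = σ x := le_antisymm hyz hxy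
    rwa [hinj this]
  · have hx' : x = i ∨ x = i + 1 := hS hxS
    have hz' : z = i ∨ z = i + 1 := hS hzS
    have hiS : i ∈ S ∧ i + 1 ∈ S := by
      rcases hx' with rfl | rfl <;> rcases hz' with rfl | rfl <;>
        first | exact absurd rfl hxz | exact ⟨hxS, hzS⟩ | exact ⟨hzS, hxS⟩
    have hc := hcons hiS.1 hiS.2
    rcases hx' with rfl | rfl
    · rcases hz' with rfl | rfl
      · exact absurd rfl hxz
      · -- x = i, z = i + 1
        rw [hc] at hyz
        have : σ y = σ x ∨ σ y = σ x + 1 := by omega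
        rcases this with h | h
        · rwa [hinj h]
        · rw [← hc] at h; rw [hinj h]; exact hzS
    · rcases hz' with rfl | rfl
      · -- x = i + 1, z = i
        rw [hc] at hxy; omega
      · exact absurd rfl hxz

private lemma hasC1P_of {k : ℕ} [NeZero k] (hk : 3 ≤ k) (U' : Finset (ZMod k))
    (𝓡'' : Finset (Finset (ZMod k))) (d : ZMod k)
    (h : ∀ S ∈ 𝓡'', ∃ i, (S : Set (ZMod k)) ⊆ {i, i + 1} ∧
      (i ∈ S → i + 1 ∈ S → i + 1 ≠ d)) :
    HasC1P U' 𝓡'' := by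
  have hinj : Function.Injective (fun x : ZMod k => (x - d).val) := by
    intro a b hab
    have := ZMod.val_injective k hab
    exact sub_left_injective this
  refine ⟨fun x => (x - d).val, hinj.injOn, ?_⟩
  intro R hR
  obtain ⟨i, hsub, hc⟩ := h R hR
  refine convexIn_of U' _ hinj R i hsub ?_
  intro h1 h2
  have hne : (i - d) + 1 ≠ 0 := by
    intro h0
    apply hc h1 h2
    have : i + 1 - d = 0 := by rw [← h0]; ring
    exact sub_eq_zero.mp this
  show (i + 1 - d).val = (i - d).val + 1
  have : i + 1 - d = (i - d) + 1 := by ring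
  rw [this, zmod_val_succ (by omega) _ hne]

/-- For `k ≥ 3`, the family `ℛ_k = { {i, i+1} : i ∈ ℤ/kℤ }` of rows of
Tucker's matrix `M_I` of order `k`, over the column set `ℤ/kℤ`, is a minimal non-C1P
matrix: it fails the consecutive-ones property but every proper restriction has it. -/
theorem MI_minimalNonC1P (k : ℕ) [NeZero k] (hk : 3 ≤ k) :
    MinimalNonC1P (Finset.univ : Finset (ZMod k))
      ((Finset.univ : Finset (ZMod k)).image (fun i => ({i, i + 1} : Finset (ZMod k)))) := by
  have h1 : (1 : ZMod k) ≠ 0 := by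
    have := (ZMod.natCast_eq_zero_iff 1 k).not.mpr (fun h => by have := Nat.le_of_dvd one_pos h; omega)
    simpa using this
  have h2 : (2 : ZMod k) ≠ 0 := by
    have := (ZMod.natCast_eq_zero_iff 2 k).not.mpr (fun h => by have := Nat.le_of_dvd two_pos h; omega)
    simpa using this
  refine ⟨fun R _ => Finset.subset_univ R, ?_, ?_⟩
  · -- not C1P
    rintro ⟨σ, hinj, hconv⟩
    have hinj' : Function.Injective σ := fun a b hab =>
      hinj (Finset.mem_univ a) (Finset.mem_univ b) hab
    obtain ⟨m, -, hm⟩ := Finset.exists_min_image Finset.univ σ ⟨0, Finset.mem_univ 0⟩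
    have hne1 : m - 1 ≠ m := fun h => h1 (sub_eq_self.mp h)
    have hne2 : m + 1 ≠ m := fun h => h1 (by simpa using h)
    have hne3 : m - 1 ≠ m + 1 := by
      intro h; apply h2; linear_combination (-1 : ZMod k) * h
    have hmem1 : ({m - 1, m} : Finset (ZMod k)) ∈
        (Finset.univ : Finset (ZMod k)).image (fun i => ({i, i + 1} : Finset (ZMod k))) := by
      refine Finset.mem_image.mpr ⟨m - 1, Finset.mem_univ _, ?_⟩
      rw [sub_add_cancel]
    have hmem2 : ({m, m + 1} : Finset (ZMod k)) ∈
        (Finset.univ : Finset (ZMod k)).image (fun i => ({i, i + 1} : Finset (ZMod k))) :=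
      Finset.mem_image.mpr ⟨m, Finset.mem_univ _, rfl⟩
    have c1 := hconv _ hmem1
    have c2 := hconv _ hmem2
    have hA : σ (m + 1) ≤ σ (m - 1) := by
      by_contra hlt
      push_neg at hlt
      have := c2 m (Finset.mem_univ _) (m - 1) (Finset.mem_univ _) (m + 1) (Finset.mem_univ _)
        (hm (m - 1) (Finset.mem_univ _)) hlt.le (by simp) (by simp)
      simp only [Finset.coe_insert, Finset.coe_singleton, Set.mem_insert_iff,
        Set.mem_singleton_iff] at this
      rcases this with h | h
      · exact hne1 h
      · exact hne3 h
    have hB : σ (m - 1) ≤ σ (m + 1) := by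
      by_contra hlt
      push_neg at hlt
      have := c1 m (Finset.mem_univ _) (m + 1) (Finset.mem_univ _) (m - 1) (Finset.mem_univ _)
        (hm (m + 1) (Finset.mem_univ _)) hlt.le (by simp) (by simp)
      simp only [Finset.coe_insert, Finset.coe_singleton, Set.mem_insert_iff,
        Set.mem_singleton_iff] at this
      rcases this with h | h
      · exact hne3 h.symm
      · exact hne2 h
    exact hne3 (hinj' (le_antisymm hB hA))
  · -- minimality
    intro 𝓡' h𝓡' U' hU' hne
    by_cases hU : U' = Finset.univ
    · subst hU
      have h𝓡ne : 𝓡' ≠ _ := hne.resolve_right (fun h => h rfl)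
      obtain ⟨R, hRmem, hRnot⟩ := Finset.exists_of_ssubset (h𝓡'.ssubset_of_ne h𝓡ne)
      obtain ⟨j, -, rfl⟩ := Finset.mem_image.mp hRmem
      apply hasC1P_of hk _ _ (j + 1)
      intro S hS
      obtain ⟨R', hR'mem, rfl⟩ := Finset.mem_image.mp hS
      obtain ⟨i, -, rfl⟩ := Finset.mem_image.mp (h𝓡' hR'mem)
      refine ⟨i, ?_, ?_⟩
      · intro x hx
        simp only [Finset.coe_inter, Set.mem_inter_iff, Finset.mem_coe,
          Finset.mem_insert, Finset.mem_singleton] at hx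
        simpa using hx.1
      · intro _ _ hEq
        have hij : i = j := by
          have := add_right_cancel hEq
          exact this
        subst hij
        exact hRnot (by simpa using hR'mem)
    · have : ∃ c, c ∉ U' := by
        by_contra hall
        push_neg at hall
        exact hU (Finset.eq_univ_iff_forall.mpr hall)
      obtain ⟨c, hc⟩ := this
      apply hasC1P_of hk _ _ c
      intro S hS
      obtain ⟨R', hR'mem, rfl⟩ := Finset.mem_image.mp hS
      obtain ⟨i, -, rfl⟩ := Finset.mem_image.mp (h𝓡' hR'mem)
      refine ⟨i, ?_, ?_⟩
      · intro x hx
        simp only [Finset.coe_inter, Set.mem_inter_iff, Finset.mem_coe,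
          Finset.mem_insert, Finset.mem_singleton] at hx
        simpa using hx.1
      · intro _ hmem hEq
        rw [hEq] at hmem
        exact hc (Finset.mem_inter.mp hmem).2
end

section
/- Let ℛ be a finite family of subsets of a finite column set U that has the consecutive-ones property, let σ be any consecutive-ones ordering of U for ℛ, and let 𝒞 be a connected component of the overlap graph of ℛ. Then every constrained Venn class of 𝒞 occupies a set of consecutive positions under σ. -/
/-- The row `R` is a member of the connected component `𝒞` of the overlap graph of `𝓡`. -/
def InComponent {α : Type*} [DecidableEq α] (𝓡 : Finset (Finset α))
    (𝒞 : (overlapGraph 𝓡).ConnectedComponent) (R : {R // R ∈ 𝓡}) : Prop :=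
  (overlapGraph 𝓡).connectedComponentMk R = 𝒞

/-- Columns `x` and `y` lie in the same Venn class of the component `𝒞`:
they belong to exactly the same members of `𝒞`. -/
def SameVennClass {α : Type*} [DecidableEq α] (𝓡 : Finset (Finset α))
    (𝒞 : (overlapGraph 𝓡).ConnectedComponent) (x y : α) : Prop :=
  ∀ R, InComponent 𝓡 𝒞 R → (x ∈ R.1 ↔ y ∈ R.1)

/-- The column `x` is constrained for the component `𝒞`: it belongs to at least one
member of `𝒞`. -/
def ConstrainedCol {α : Type*} [DecidableEq α] (𝓡 : Finset (Finset α))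
    (𝒞 : (overlapGraph 𝓡).ConnectedComponent) (x : α) : Prop :=
  ∃ R, InComponent 𝓡 𝒞 R ∧ x ∈ R.1

lemma find_flip {V : Type*} (G : SimpleGraph V) (P : V → Prop) :
    ∀ {S T : V}, G.Walk S T → P S → ¬ P T →
    ∃ A B, G.Reachable S A ∧ G.Adj A B ∧ P A ∧ ¬ P B := by
  intro S T w
  induction w with
  | nil => intro h h'; exact absurd h h'
  | @cons u v _ h w ih =>
    intro hS hT
    by_cases hP : P v
    · obtain ⟨A, B, hr, hadj, hA, hB⟩ := ih hP hT
      exact ⟨A, B, (h.reachable).trans hr, hadj, hA, hB⟩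
    · exact ⟨u, v, SimpleGraph.Reachable.refl u, h, hS, hP⟩

/-- If `𝓡` has the consecutive-ones property, `σ` is any
consecutive-ones ordering for it, and `𝒞` is a connected component of the overlap
graph of `𝓡`, then every constrained Venn class of `𝒞` occupies consecutive
positions under `σ`. -/
theorem constrained_vennClass_consecutive {α : Type*} [DecidableEq α]
    (U : Finset α) (𝓡 : Finset (Finset α)) (hsub : ∀ R ∈ 𝓡, R ⊆ U)
    (σ : α → ℕ) (hσ : IsC1POrdering U 𝓡 σ)
    (𝒞 : (overlapGraph 𝓡).ConnectedComponent)
    (a : α) (ha : a ∈ U) (hcon : ConstrainedCol 𝓡 𝒞 a) :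
    ConvexIn U σ {y : α | y ∈ U ∧ SameVennClass 𝓡 𝒞 a y} := by
  obtain ⟨hinj, hconv⟩ := hσ
  obtain ⟨R₀, hR₀C, haR₀⟩ := hcon
  intro x hx y hy z hz hxy hyz hxS hzS
  obtain ⟨hxU, hxV⟩ := hxS
  obtain ⟨hzU, hzV⟩ := hzS
  refine ⟨hy, ?_⟩
  intro R hRC
  constructor
  · intro haR
    exact hconv R.1 R.2 x hx y hy z hz hxy hyz ((hxV R hRC).mp haR) ((hzV R hRC).mp haR)
  · intro hyR
    by_contra haR
    have hxR : x ∉ R.1 := fun h => haR ((hxV R hRC).mpr h)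
    have hzR : z ∉ R.1 := fun h => haR ((hzV R hRC).mpr h)
    have hxy' : σ x < σ y :=
      lt_of_le_of_ne hxy (fun h => hxR (by rwa [hinj (Finset.mem_coe.mpr hx) (Finset.mem_coe.mpr hy) h]))
    have hyz' : σ y < σ z :=
      lt_of_le_of_ne hyz (fun h => hzR (by rwa [← hinj (Finset.mem_coe.mpr hy) (Finset.mem_coe.mpr hz) h]))
    -- P S : every element of S lies strictly between x and z
    set P : {R // R ∈ 𝓡} → Prop := fun S => ∀ u ∈ S.1, σ x < σ u ∧ σ u < σ z with hP
    have hPR : P R := by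
      intro u hu
      have huU : u ∈ U := hsub R.1 R.2 hu
      constructor
      · by_contra hc
        push_neg at hc
        exact hxR (hconv R.1 R.2 u huU x hx y hy hc hxy hu hyR)
      · by_contra hc
        push_neg at hc
        exact hzR (hconv R.1 R.2 y hy z hz u huU hyz hc hyR hu)
    have hxR₀ : x ∈ R₀.1 := (hxV R₀ hR₀C).mp haR₀
    have hPR₀ : ¬ P R₀ := by
      intro hp
      exact lt_irrefl (σ x) (hp x hxR₀).1
    have hreach : (overlapGraph 𝓡).Reachable R R₀ :=
      SimpleGraph.ConnectedComponent.exact (hRC.trans hR₀C.symm)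
    obtain ⟨A, B, hRA, hAB, hPA, hPB⟩ := find_flip (overlapGraph 𝓡) P hreach.some hPR hPR₀
    -- B is in the component 𝒞
    have hBC : InComponent 𝓡 𝒞 B := by
      have h1 : (overlapGraph 𝓡).connectedComponentMk B = (overlapGraph 𝓡).connectedComponentMk A :=
        SimpleGraph.ConnectedComponent.sound hAB.symm.reachable
      have h2 : (overlapGraph 𝓡).connectedComponentMk A = (overlapGraph 𝓡).connectedComponentMk R :=
        SimpleGraph.ConnectedComponent.sound hRA.symm
      exact (h1.trans h2).trans hRC
    obtain ⟨hne, hAsubB, _⟩ := (hAB : Overlaps A.1 B.1)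
    obtain ⟨s, hs⟩ := hne
    have hsA : s ∈ A.1 := (Finset.mem_inter.mp hs).1
    have hsB : s ∈ B.1 := (Finset.mem_inter.mp hs).2
    have hsU : s ∈ U := hsub A.1 A.2 hsA
    obtain ⟨hxs, hsz⟩ := hPA s hsA
    -- get a point of B outside the open interval
    simp only [hP, not_forall] at hPB
    obtain ⟨t, htB, htbad⟩ := hPB
    have htU : t ∈ U := hsub B.1 B.2 htB
    have hxzB : x ∈ B.1 ∧ z ∈ B.1 := by
      rcases not_and_or.mp htbad with hc | hc
      · push_neg at hc
        have hxB : x ∈ B.1 := hconv B.1 B.2 t htU x hx s hsU hc hxs.le htB hsB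
        have haB : a ∈ B.1 := (hxV B hBC).mpr hxB
        exact ⟨hxB, (hzV B hBC).mp haB⟩
      · push_neg at hc
        have hzB : z ∈ B.1 := hconv B.1 B.2 s hsU z hz t htU hsz.le hc hsB htB
        have haB : a ∈ B.1 := (hzV B hBC).mpr hzB
        exact ⟨(hxV B hBC).mp haB, hzB⟩
    apply hAsubB
    intro u huA
    obtain ⟨h1, h2⟩ := hPA u huA
    exact hconv B.1 B.2 x hx u (hsub A.1 A.2 huA) z hz h1.le h2.le hxzB.1 hxzB.2
end

section
/- Let ℛ' be a finite family of subsets of a finite column set U that has the consecutive-ones property, let 𝒞 be a connected component of the overlap graph of ℛ' with Q the union of the members of 𝒞, and let Z ⊆ U with Z not a subset of Q. Suppose there exist a consecutive-ones ordering σ of ℛ' and columns a, b, c lying in three pairwise distinct constrained Venn classes of 𝒞 such that σ(a) < σ(b) < σ(c), a ∉ Z, b ∈ Z, and c ∉ Z (a 0-1-0 configuration for Z). Then ℛ' ∪ {Z} does not have the consecutive-ones property. -/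
set_option linter.unusedSectionVars false


namespace ZOZ
variable {α : Type*} [DecidableEq α]

def Un : List (Finset α) → Finset α
  | [] => ∅
  | R :: l => R ∪ Un l
lemma mem_Un {l : List (Finset α)} {x : α} : x ∈ Un l ↔ ∃ T ∈ l, x ∈ T := by
  induction l with
  | nil => simp [Un]
  | cons R l ih => simp [Un, ih]
def Good : List (Finset α) → Prop
  | [] => True
  | R :: l => (l = [] ∨ ∃ S ∈ l, Overlaps R S) ∧ Good l
def Valid (U : Finset α) (l : List (Finset α)) (τ : α → ℕ) : Prop :=
  Set.InjOn τ U ∧ ∀ T ∈ l, ConvexIn U τ (T : Set α)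
lemma Valid_tail {U : Finset α} {R : Finset α} {l : List (Finset α)} {τ : α → ℕ}
    (h : Valid U (R :: l) τ) : Valid U l τ :=
  ⟨h.1, fun T hT => h.2 T (List.mem_cons_of_mem _ hT)⟩
def Fconstr (l : List (Finset α)) (x : α) : Prop := ∃ T ∈ l, x ∈ T
def Fsame (l : List (Finset α)) (x y : α) : Prop := ∀ T ∈ l, (x ∈ T ↔ y ∈ T)
def FPair (U : Finset α) (l : List (Finset α)) (x y : α) : Prop :=
  x ∈ U ∧ y ∈ U ∧ Fconstr l x ∧ Fconstr l y ∧ ¬ Fsame l x y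
def Agree (τ τ' : α → ℕ) (x y : α) : Prop := τ x < τ y ↔ τ' x < τ' y
lemma Fsame.refl' (l : List (Finset α)) (x : α) : Fsame l x x := fun _ _ => Iff.rfl
lemma Fsame.symm' {l : List (Finset α)} {x y : α} (h : Fsame l x y) : Fsame l y x :=
  fun T hT => (h T hT).symm
lemma Fsame.trans' {l : List (Finset α)} {x y z : α} (h : Fsame l x y) (h2 : Fsame l y z) :
    Fsame l x z := fun T hT => (h T hT).trans (h2 T hT)
lemma Fsame_tail {R : Finset α} {l : List (Finset α)} {x y : α}
    (h : Fsame (R :: l) x y) : Fsame l x y := fun T hT => h T (List.mem_cons_of_mem _ hT)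
lemma Fconstr_same {l : List (Finset α)} {x y : α} (hc : Fconstr l x) (hs : Fsame l x y) :
    Fconstr l y := by
  obtain ⟨T, hT, hxT⟩ := hc
  exact ⟨T, hT, (hs T hT).1 hxT⟩
lemma Fconstr_mem_Un {l : List (Finset α)} {x : α} (h : Fconstr l x) : x ∈ Un l :=
  mem_Un.2 h
lemma Un_mem_U {U : Finset α} {l : List (Finset α)} (hrows : ∀ T ∈ l, T ⊆ U) {x : α}
    (h : x ∈ Un l) : x ∈ U := by
  obtain ⟨T, hT, hxT⟩ := mem_Un.1 h
  exact hrows T hT hxT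
lemma un_convex (U : Finset α) (l : List (Finset α)) (τ : α → ℕ)
    (hrows : ∀ T ∈ l, T ⊆ U)
    (hg : Good l) (hv : Valid U l τ) : ConvexIn U τ ((Un l : Finset α) : Set α) := by
  induction l with
  | nil => intro x hx y hy z hz _ _ hxS; simp [Un] at hxS
  | cons R l ih =>
    obtain ⟨hgh, hgt⟩ := hg
    have hRc : ConvexIn U τ (R : Set α) := hv.2 R (List.mem_cons_self)
    have ihc : ConvexIn U τ ((Un l : Finset α) : Set α) :=
      ih (fun T hT => hrows T (List.mem_cons_of_mem _ hT)) hgt (Valid_tail hv)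
    intro x hx y hy z hz hxy hyz hxS hzS
    simp only [Finset.coe_union, Set.mem_union, Un, Finset.coe_sort_coe,
      Finset.mem_coe] at hxS hzS ⊢
    rcases hxS with hxR | hxW
    · rcases hzS with hzR | hzW
      · exact Or.inl (hRc x hx y hy z hz hxy hyz hxR hzR)
      · rcases hgh with rfl | ⟨S, hS, hOv⟩
        · simp [Un] at hzW
        · obtain ⟨s, hs⟩ := hOv.1
          have hsR : s ∈ R := (Finset.mem_inter.1 hs).1
          have hsW : s ∈ Un l := mem_Un.2 ⟨S, hS, (Finset.mem_inter.1 hs).2⟩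
          have hsU : s ∈ U := hrows R (List.mem_cons_self) hsR
          rcases le_total (τ y) (τ s) with h1 | h1
          · exact Or.inl (hRc x hx y hy s hsU hxy h1 hxR hsR)
          · exact Or.inr (ihc s hsU y hy z hz h1 hyz hsW hzW)
    · rcases hzS with hzR | hzW
      · rcases hgh with rfl | ⟨S, hS, hOv⟩
        · simp [Un] at hxW
        · obtain ⟨s, hs⟩ := hOv.1
          have hsR : s ∈ R := (Finset.mem_inter.1 hs).1
          have hsW : s ∈ Un l := mem_Un.2 ⟨S, hS, (Finset.mem_inter.1 hs).2⟩
          have hsU : s ∈ U := hrows R (List.mem_cons_self) hsR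
          rcases le_total (τ y) (τ s) with h1 | h1
          · exact Or.inr (ihc x hx y hy s hsU hxy h1 hxW hsW)
          · exact Or.inl (hRc s hsU y hy z hz h1 hyz hsR hzR)
      · exact Or.inr (ihc x hx y hy z hz hxy hyz hxW hzW)


/-- L2: Venn classes of a chain-connected family are convex. -/
lemma class_convex (U : Finset α) (l : List (Finset α)) (τ : α → ℕ)
    (hrows : ∀ T ∈ l, T ⊆ U) (hg : Good l) (hv : Valid U l τ) :
    ∀ x y t, x ∈ U → y ∈ U → t ∈ U → Fconstr l x → Fsame l x y →
      τ x ≤ τ t → τ t ≤ τ y → Fsame l x t := by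
  induction l with
  | nil => intro x y t _ _ _ hc _ _ _; exact absurd hc (by simp [Fconstr])
  | cons R l ih =>
    intro x y t hx hy ht hc hs hxt hty
    obtain ⟨hgh, hgt⟩ := hg
    have hinj := hv.1
    have hRc : ConvexIn U τ (R : Set α) := hv.2 R (List.mem_cons_self)
    have hvt := Valid_tail hv
    have hrt : ∀ T ∈ l, T ⊆ U := fun T hT => hrows T (List.mem_cons_of_mem _ hT)
    have hWc : ConvexIn U τ ((Un l : Finset α) : Set α) := un_convex U l τ hrt hgt hvt
    by_cases hxW : x ∈ Un l
    · -- x (hence y) in W' = Un l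
      have hcx' : Fconstr l x := mem_Un.1 hxW
      have hs' : Fsame l x y := Fsame_tail hs
      have hyW : y ∈ Un l := Fconstr_mem_Un (Fconstr_same hcx' hs')
      have htW : t ∈ Un l := hWc x hx t ht y hy hxt hty hxW hyW
      have ihsame : Fsame l x t := ih hrt hgt hvt x y t hx hy ht hcx' hs' hxt hty
      have hxRy : x ∈ R ↔ y ∈ R := hs R (List.mem_cons_self)
      by_cases hxR : x ∈ R
      · have hyR : y ∈ R := hxRy.1 hxR
        have htR : t ∈ R := hRc x hx t ht y hy hxt hty hxR hyR
        intro T hT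
        rcases List.mem_cons.1 hT with rfl | hT'
        · exact ⟨fun _ => htR, fun _ => hxR⟩
        · exact ihsame T hT'
      · have hyR : y ∉ R := fun h => hxR (hxRy.2 h)
        have htR : t ∉ R := by
          intro htR
          -- t ∈ R while x, y ∉ R : derive R ⊆ S for the overlap partner, contradiction
          have hxt' : τ x < τ t := by
            rcases lt_or_eq_of_le hxt with h | h
            · exact h
            · exact absurd (hinj hx ht h) (fun e => hxR (e ▸ htR))
          have hty' : τ t < τ y := by
            rcases lt_or_eq_of_le hty with h | h
            · exact h
            · exact absurd (hinj ht hy h) (fun e => hyR (e ▸ htR))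
          have hRsub : ∀ r ∈ R, Fsame l x r := by
            intro r hrR
            have hrU : r ∈ U := hrows R (List.mem_cons_self) hrR
            have hxr : τ x < τ r := by
              by_contra hcon
              push_neg at hcon
              rcases lt_or_eq_of_le hcon with h | h
              · exact hxR (hRc r hrU x hx t ht (le_of_lt h) hxt hrR htR)
              · exact hxR (hinj hrU hx h ▸ hrR)
            have hry : τ r < τ y := by
              by_contra hcon
              push_neg at hcon
              rcases lt_or_eq_of_le hcon with h | h
              · exact hyR (hRc t ht y hy r hrU (le_of_lt hty') (le_of_lt h) htR hrR)
              · exact hyR (by rw [hinj hy hrU h.symm.symm]; exact hrR)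
            exact ih hrt hgt hvt x y r hx hy hrU hcx' hs' (le_of_lt hxr) (le_of_lt hry)
          rcases hgh with rfl | ⟨S, hS, hOv⟩
          · simp [Un] at hxW
          · obtain ⟨s, hsmem⟩ := hOv.1
            have hsR : s ∈ R := (Finset.mem_inter.1 hsmem).1
            have hsS : s ∈ S := (Finset.mem_inter.1 hsmem).2
            have hxS : x ∈ S := ((hRsub s hsR) S hS).2 hsS
            exact hOv.2.1 (fun r hrR => ((hRsub r hrR) S hS).1 hxS)
        intro T hT
        rcases List.mem_cons.1 hT with rfl | hT'
        · exact ⟨fun h => absurd h hxR, fun h => absurd h htR⟩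
        · exact ihsame T hT'
    · -- x ∉ Un l : x is only in R
      have hxR : x ∈ R := by
        obtain ⟨T, hT, hxT⟩ := hc
        rcases List.mem_cons.1 hT with rfl | hT'
        · exact hxT
        · exact absurd (mem_Un.2 ⟨T, hT', hxT⟩) hxW
      have hyR : y ∈ R := (hs R (List.mem_cons_self)).1 hxR
      have htR : t ∈ R := hRc x hx t ht y hy hxt hty hxR hyR
      have hyW : y ∉ Un l := by
        intro h
        obtain ⟨T, hT, hyT⟩ := mem_Un.1 h
        exact hxW (mem_Un.2 ⟨T, hT, (hs T (List.mem_cons_of_mem _ hT)).2 hyT⟩)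
      have htW : t ∉ Un l := by
        intro htW
        have hxt' : τ x < τ t := by
          rcases lt_or_eq_of_le hxt with h | h
          · exact h
          · exact absurd ((hinj hx ht h) ▸ htW) hxW
        have hty' : τ t < τ y := by
          rcases lt_or_eq_of_le hty with h | h
          · exact h
          · exact absurd ((hinj ht hy h).symm ▸ htW) hyW
        rcases hgh with rfl | ⟨S, hS, hOv⟩
        · simp [Un] at htW
        · have hWsub : ∀ w ∈ Un l, w ∈ R := by
            intro w hw
            have hwU : w ∈ U := Un_mem_U hrt hw
            have hxw : τ x < τ w := by
              by_contra hcon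
              push_neg at hcon
              rcases lt_or_eq_of_le hcon with h | h
              · exact hxW (hWc w hwU x hx t ht (le_of_lt h) hxt hw htW)
              · exact hxW ((hinj hwU hx h) ▸ hw)
            have hwy : τ w < τ y := by
              by_contra hcon
              push_neg at hcon
              rcases lt_or_eq_of_le hcon with h | h
              · exact hyW (hWc t ht y hy w hwU (le_of_lt hty') (le_of_lt h) htW hw)
              · exact hyW (by rw [hinj hy hwU h.symm.symm]; exact hw)
            exact hRc x hx w hwU y hy (le_of_lt hxw) (le_of_lt hwy) hxR hyR
          exact hOv.2.2 (fun v hv => hWsub v (mem_Un.2 ⟨S, hS, hv⟩))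
      intro T hT
      rcases List.mem_cons.1 hT with rfl | hT'
      · exact ⟨fun _ => htR, fun _ => hxR⟩
      · constructor
        · intro h; exact absurd (mem_Un.2 ⟨T, hT', h⟩) hxW
        · intro h; exact absurd (mem_Un.2 ⟨T, hT', h⟩) htW

-- ####### new content #######

lemma not_between_of_convex {U : Finset α} {π : α → ℕ} {T : Set α}
    (hc : ConvexIn U π T) {p q w : α} (hp : p ∈ U) (hq : q ∈ U) (hw : w ∈ U)
    (hpT : p ∈ T) (hqT : q ∈ T) (hwT : w ∉ T) : ¬(π p ≤ π w ∧ π w ≤ π q) :=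
  fun ⟨h1, h2⟩ => hwT (hc p hp w hw q hq h1 h2 hpT hqT)

/-- both-directions non-betweenness for finset rows -/
lemma nb {U : Finset α} {π : α → ℕ} {T : Finset α}
    (hc : ConvexIn U π (T : Set α)) {p q w : α} (hp : p ∈ U) (hq : q ∈ U) (hw : w ∈ U)
    (hpT : p ∈ T) (hqT : q ∈ T) (hwT : w ∉ T) :
    ¬(π p ≤ π w ∧ π w ≤ π q) ∧ ¬(π q ≤ π w ∧ π w ≤ π p) :=
  ⟨not_between_of_convex hc hp hq hw hpT hqT hwT,
   not_between_of_convex hc hq hp hw hqT hpT hwT⟩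

/-- L3 core: anchor pairs are uniformly oriented in any single valid ordering. -/
lemma core {U : Finset α} {R S : Finset α} {τ : α → ℕ}
    (hinj : Set.InjOn τ U) (hRc : ConvexIn U τ (R : Set α)) (hSc : ConvexIn U τ (S : Set α))
    (hRU : R ⊆ U) (hSU : S ⊆ U) (hOv : Overlaps R S) :
    ∀ u u' v v', u ∈ S → u ∈ R → u' ∈ S → u' ∈ R → v ∈ S → v ∉ R → v' ∈ S → v' ∉ R →
      (τ u < τ v ↔ τ u' < τ v') := by
  intro u u' v v' huS huR hu'S hu'R hvS hvR hv'S hv'R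
  have huU := hSU huS; have hu'U := hSU hu'S; have hvU := hSU hvS; have hv'U := hSU hv'S
  have e1 := nb hRc huU hu'U hvU huR hu'R hvR
  have hne1 : τ u ≠ τ v := fun h => hvR (hinj huU hvU h ▸ huR)
  have hne2 : τ u' ≠ τ v := fun h => hvR (hinj hu'U hvU h ▸ hu'R)
  have hne3 : τ u' ≠ τ v' := fun h => hv'R (hinj hu'U hv'U h ▸ hu'R)
  -- u' is not (even weakly) between v and v'
  have e2 : ¬(τ v ≤ τ u' ∧ τ u' ≤ τ v') ∧ ¬(τ v' ≤ τ u' ∧ τ u' ≤ τ v) := by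
    constructor
    · rintro ⟨h1, h2⟩
      apply hOv.2.1
      intro r hrR
      have hrU := hRU hrR
      have hvr : τ v < τ r := by
        by_contra hcon
        push_neg at hcon
        rcases lt_or_eq_of_le hcon with h | h
        · exact hvR (hRc r hrU v hvU u' hu'U (le_of_lt h) h1 hrR hu'R)
        · exact hvR (by rw [← hinj hrU hvU h.symm.symm]; exact hrR)
      have hrv' : τ r ≤ τ v' := by
        by_contra hcon
        push_neg at hcon
        exact hv'R (hRc u' hu'U v' hv'U r hrU h2 (le_of_lt hcon) hu'R hrR)
      exact hSc v hvU r hrU v' hv'U (le_of_lt hvr) hrv' hvS hv'S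
    · rintro ⟨h1, h2⟩
      apply hOv.2.1
      intro r hrR
      have hrU := hRU hrR
      have hv'r : τ v' < τ r := by
        by_contra hcon
        push_neg at hcon
        rcases lt_or_eq_of_le hcon with h | h
        · exact hv'R (hRc r hrU v' hv'U u' hu'U (le_of_lt h) h1 hrR hu'R)
        · exact hv'R (by rw [← hinj hrU hv'U h.symm.symm]; exact hrR)
      have hrv : τ r ≤ τ v := by
        by_contra hcon
        push_neg at hcon
        exact hvR (hRc u' hu'U v hvU r hrU h2 (le_of_lt hcon) hu'R hrR)
      exact hSc v' hv'U r hrU v hvU (le_of_lt hv'r) hrv hv'S hvS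
  obtain ⟨e1a, e1b⟩ := e1
  obtain ⟨e2a, e2b⟩ := e2
  omega

/-- position reversal -/
def rev (U : Finset α) (τ : α → ℕ) : α → ℕ := fun x => U.sup τ - τ x

lemma rev_lt {U : Finset α} {τ : α → ℕ} {x y : α} (hx : x ∈ U) (hy : y ∈ U) :
    (rev U τ x < rev U τ y ↔ τ y < τ x) := by
  have h1 : τ x ≤ U.sup τ := Finset.le_sup hx
  have h2 : τ y ≤ U.sup τ := Finset.le_sup hy
  unfold rev
  omega

lemma rev_valid {U : Finset α} {l : List (Finset α)} {τ : α → ℕ} (hv : Valid U l τ) :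
    Valid U l (rev U τ) := by
  constructor
  · intro a ha b hb h
    have h1 : τ a ≤ U.sup τ := Finset.le_sup ha
    have h2 : τ b ≤ U.sup τ := Finset.le_sup hb
    exact hv.1 ha hb (by unfold rev at h; omega)
  · intro T hT x hx y hy z hz h1 h2 hxT hzT
    have k1 : τ x ≤ U.sup τ := Finset.le_sup hx
    have k2 : τ y ≤ U.sup τ := Finset.le_sup hy
    have k3 : τ z ≤ U.sup τ := Finset.le_sup hz
    unfold rev at h1 h2
    exact hv.2 T hT z hz y hy x hx (by omega) (by omega) hzT hxT


/-- The B-case workhorse: `x`, `y` lie in `Un l`, same `l`-class, separated by `R`. -/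
lemma Bpair (U : Finset α) (R S : Finset α) (l : List (Finset α)) (τ τ' : α → ℕ)
    (hrows : ∀ T ∈ R :: l, T ⊆ U) (hg : Good (R :: l)) (hS : S ∈ l) (hOv : Overlaps R S)
    (hv : Valid U (R :: l) τ) (hv' : Valid U (R :: l) τ')
    (hIH : ∀ x y, FPair U l x y → Agree τ τ' x y)
    (hX : (∀ u v, u ∈ S → u ∈ R → v ∈ S → v ∉ R → Agree τ τ' u v) ∨ (∃ p q, FPair U l p q)) :
    ∀ x y, x ∈ U → y ∈ U → Fconstr l x → Fsame l x y → x ∈ R → y ∉ R →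
      Agree τ τ' x y := by
  have hrt : ∀ T ∈ l, T ⊆ U := fun T hT => hrows T (List.mem_cons_of_mem _ hT)
  have hgt : Good l := hg.2
  intro x y hx hy hcx hsxy hxR hyR
  have hcy : Fconstr l y := Fconstr_same hcx hsxy
  have hxW : x ∈ Un l := Fconstr_mem_Un hcx
  have hyW : y ∈ Un l := Fconstr_mem_Un hcy
  have hxy_ne : x ≠ y := fun e => hyR (e ▸ hxR)
  by_cases hB1 : ∃ t, t ∈ U ∧ t ∈ R ∧ t ∈ Un l ∧ ¬ Fsame l x t
  · -- B1 : a column of R ∩ Un l outside x's class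
    obtain ⟨t, htU, htR, htW, htns⟩ := hB1
    have hxt_ne : x ≠ t := fun e => htns (e ▸ Fsame.refl' l x)
    have hyt_ne : y ≠ t := fun e => htns (e ▸ hsxy)
    have hynst : ¬ Fsame l y t := fun h => htns (hsxy.trans' h)
    have hagyt : Agree τ τ' y t := hIH y t ⟨hy, htU, hcy, mem_Un.1 htW, hynst⟩
    have geo : ∀ π : α → ℕ, Valid U (R :: l) π →
        (π y < π x ∧ π x < π t) ∨ (π t < π x ∧ π x < π y) := by
      intro π hπ
      have hπt := Valid_tail hπ
      have hRc : ConvexIn U π (R : Set α) := hπ.2 R (List.mem_cons_self)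
      have f1 := nb hRc hx htU hy hxR htR hyR
      have f2a : ¬(π x ≤ π t ∧ π t ≤ π y) := by
        rintro ⟨h1, h2⟩
        exact htns (class_convex U l π hrt hgt hπt x y t hx hy htU hcx hsxy h1 h2)
      have f2b : ¬(π y ≤ π t ∧ π t ≤ π x) := by
        rintro ⟨h1, h2⟩
        exact htns (hsxy.trans'
          (class_convex U l π hrt hgt hπt y x t hy hx htU hcy hsxy.symm' h1 h2))
      have d1 : π x ≠ π y := fun h => hxy_ne (hπ.1 hx hy h)
      have d2 : π x ≠ π t := fun h => hxt_ne (hπ.1 hx htU h)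
      have d3 : π y ≠ π t := fun h => hyt_ne (hπ.1 hy htU h)
      obtain ⟨f1a, f1b⟩ := f1
      omega
    have g1 := geo τ hv
    have g2 := geo τ' hv'
    unfold Agree at hagyt ⊢
    omega
  · by_cases hB2 : ∃ t, t ∈ U ∧ t ∈ Un l ∧ ¬ Fsame l x t
    · -- B2 : second class exists in Un l, but R ∩ Un l is inside x's class
      obtain ⟨t, htU, htW, htns⟩ := hB2
      have htR : t ∉ R := fun h => hB1 ⟨t, htU, h, htW, htns⟩
      have hsame_RW : ∀ w, w ∈ R → w ∈ Un l → Fsame l x w := by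
        intro w hwR hwW
        by_contra hcon
        exact hB1 ⟨w, Un_mem_U hrt hwW, hwR, hwW, hcon⟩
      obtain ⟨s₀, hs₀⟩ := hOv.1
      have hs₀R : s₀ ∈ R := (Finset.mem_inter.1 hs₀).1
      have hs₀S : s₀ ∈ S := (Finset.mem_inter.1 hs₀).2
      have hs₀W : s₀ ∈ Un l := mem_Un.2 ⟨S, hS, hs₀S⟩
      have hxS : x ∈ S := ((hsame_RW s₀ hs₀R hs₀W) S hS).2 hs₀S
      have hr : ∃ r, r ∈ R ∧ r ∉ Un l := by
        by_contra hcon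
        push_neg at hcon
        apply hOv.2.1
        intro r hrR
        exact ((hsame_RW r hrR (hcon r hrR)) S hS).1 hxS
      obtain ⟨r, hrR, hrW⟩ := hr
      have hrU : r ∈ U := hrows R (List.mem_cons_self) hrR
      have hxt_ne : x ≠ t := fun e => htns (e ▸ Fsame.refl' l x)
      have hagxt : Agree τ τ' x t := hIH x t ⟨hx, htU, hcx, mem_Un.1 htW, htns⟩
      have hxr_ne : x ≠ r := fun e => hrW (e ▸ hxW)
      have hyr_ne : y ≠ r := fun e => hrW (e ▸ hyW)
      have htr_ne : t ≠ r := fun e => hrW (e ▸ htW)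
      have geo : ∀ π : α → ℕ, Valid U (R :: l) π →
          ((π y < π x ∧ π x < π r) ∨ (π r < π x ∧ π x < π y)) ∧
          ((π t < π x ∧ π x < π r) ∨ (π r < π x ∧ π x < π t)) := by
        intro π hπ
        have hπt := Valid_tail hπ
        have hRc : ConvexIn U π (R : Set α) := hπ.2 R (List.mem_cons_self)
        have hWc : ConvexIn U π ((Un l : Finset α) : Set α) := un_convex U l π hrt hgt hπt
        obtain ⟨f1a, f1b⟩ := nb hRc hx hrU hy hxR hrR hyR
        obtain ⟨f2a, f2b⟩ := nb hWc hx hy hrU hxW hyW hrW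
        obtain ⟨f3a, f3b⟩ := nb hRc hx hrU htU hxR hrR htR
        obtain ⟨f4a, f4b⟩ := nb hWc hx htU hrU hxW htW hrW
        have d1 : π x ≠ π y := fun h => hxy_ne (hπ.1 hx hy h)
        have d2 : π x ≠ π r := fun h => hxr_ne (hπ.1 hx hrU h)
        have d3 : π y ≠ π r := fun h => hyr_ne (hπ.1 hy hrU h)
        have d4 : π x ≠ π t := fun h => hxt_ne (hπ.1 hx htU h)
        have d5 : π t ≠ π r := fun h => htr_ne (hπ.1 htU hrU h)
        constructor
        · omega
        · omega
      obtain ⟨g1a, g1b⟩ := geo τ hv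
      obtain ⟨g2a, g2b⟩ := geo τ' hv'
      unfold Agree at hagxt ⊢
      omega
    · -- B3 : Un l is entirely within x's class
      push_neg at hB2
      rcases hX with hanch | ⟨p, q, hpq⟩
      · obtain ⟨s₀, hs₀⟩ := hOv.1
        have hs₀R : s₀ ∈ R := (Finset.mem_inter.1 hs₀).1
        have hs₀S : s₀ ∈ S := (Finset.mem_inter.1 hs₀).2
        have hs₀W : s₀ ∈ Un l := mem_Un.2 ⟨S, hS, hs₀S⟩
        have hxS : x ∈ S :=
          ((hB2 s₀ (Un_mem_U hrt hs₀W) hs₀W) S hS).2 hs₀S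
        have hyS : y ∈ S := (hsxy S hS).1 hxS
        exact hanch x y hxS hxR hyS hyR
      · exfalso
        obtain ⟨hp1, hq1, hcp, hcq, hnspq⟩ := hpq
        have h1 : Fsame l x p := hB2 p hp1 (Fconstr_mem_Un hcp)
        have h2 : Fsame l x q := hB2 q hq1 (Fconstr_mem_Un hcq)
        exact hnspq (h1.symm'.trans' h2)


lemma anchorFromIH (U : Finset α) (R S : Finset α) (l : List (Finset α)) (τ τ' : α → ℕ)
    (hrows : ∀ T ∈ R :: l, T ⊆ U) (hg : Good (R :: l)) (hS : S ∈ l) (hOv : Overlaps R S)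
    (hv : Valid U (R :: l) τ) (hv' : Valid U (R :: l) τ')
    (hIH : ∀ x y, FPair U l x y → Agree τ τ' x y)
    (hex : ∃ p q, FPair U l p q) :
    ∀ u v, u ∈ S → u ∈ R → v ∈ S → v ∉ R → Agree τ τ' u v := by
  intro u v huS huR hvS hvR
  have hSU : S ⊆ U := hrows S (List.mem_cons_of_mem _ hS)
  have huU := hSU huS; have hvU := hSU hvS
  have hcu : Fconstr l u := ⟨S, hS, huS⟩
  have hcv : Fconstr l v := ⟨S, hS, hvS⟩
  by_cases hsuv : Fsame l u v
  · exact Bpair U R S l τ τ' hrows hg hS hOv hv hv' hIH (Or.inr hex) u v huU hvU hcu hsuv huR hvR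
  · exact hIH u v ⟨huU, hvU, hcu, hcv, hsuv⟩

lemma agree_symm {τ τ' : α → ℕ} {x y : α} (h : Agree τ τ' x y)
    (h1 : τ x ≠ τ y) (h2 : τ' x ≠ τ' y) : Agree τ τ' y x := by
  unfold Agree at *; omega

/-- L4 : extension step, preserve version. -/
lemma stepPres (U : Finset α) (R S : Finset α) (l : List (Finset α)) (τ τ' : α → ℕ)
    (hrows : ∀ T ∈ R :: l, T ⊆ U) (hg : Good (R :: l)) (hS : S ∈ l) (hOv : Overlaps R S)
    (hv : Valid U (R :: l) τ) (hv' : Valid U (R :: l) τ')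
    (hIH : ∀ x y, FPair U l x y → Agree τ τ' x y)
    (hanch : ∀ u v, u ∈ S → u ∈ R → v ∈ S → v ∉ R → Agree τ τ' u v) :
    ∀ x y, FPair U (R :: l) x y → Agree τ τ' x y := by
  have hrt : ∀ T ∈ l, T ⊆ U := fun T hT => hrows T (List.mem_cons_of_mem _ hT)
  have hgt : Good l := hg.2
  have hvt := Valid_tail hv
  have hvt' := Valid_tail hv'
  have hSU : S ⊆ U := hrows S (List.mem_cons_of_mem _ hS)
  have hRU : R ⊆ U := hrows R (List.mem_cons_self)
  -- the C-case : x in Un l, y only in R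
  have hC : ∀ x y, x ∈ U → y ∈ U → x ∈ Un l → y ∈ R → y ∉ Un l → Agree τ τ' x y := by
    intro x y hx hy hxW hyR hyW
    have hcx : Fconstr l x := mem_Un.1 hxW
    have hxy_ne : x ≠ y := fun e => hyW (e ▸ hxW)
    by_cases hxR : x ∈ R
    · -- C2a : pick w ∈ S \ R
      obtain ⟨w, hwS, hwR⟩ := Finset.not_subset.1 hOv.2.2
      have hwU : w ∈ U := hSU hwS
      have hwW : w ∈ Un l := mem_Un.2 ⟨S, hS, hwS⟩
      have hxw_ne : x ≠ w := fun e => hwR (e ▸ hxR)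
      have hyw_ne : y ≠ w := fun e => hyW (e ▸ hwW)
      have hagxw : Agree τ τ' x w := by
        by_cases hsxw : Fsame l x w
        · exact Bpair U R S l τ τ' hrows hg hS hOv hv hv' hIH (Or.inl hanch)
            x w hx hwU hcx hsxw hxR hwR
        · exact hIH x w ⟨hx, hwU, hcx, mem_Un.1 hwW, hsxw⟩
      have geo : ∀ π : α → ℕ, Valid U (R :: l) π →
          ((π y < π x ∧ π x < π w) ∨ (π w < π x ∧ π x < π y)) := by
        intro π hπ
        have hRc : ConvexIn U π (R : Set α) := hπ.2 R (List.mem_cons_self)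
        have hWc : ConvexIn U π ((Un l : Finset α) : Set α) :=
          un_convex U l π hrt hgt (Valid_tail hπ)
        obtain ⟨f1a, f1b⟩ := nb hWc hx hwU hy hxW hwW hyW
        obtain ⟨f2a, f2b⟩ := nb hRc hx hy hwU hxR hyR hwR
        have d1 : π x ≠ π y := fun h => hxy_ne (hπ.1 hx hy h)
        have d2 : π x ≠ π w := fun h => hxw_ne (hπ.1 hx hwU h)
        have d3 : π y ≠ π w := fun h => hyw_ne (hπ.1 hy hwU h)
        omega
      have g1 := geo τ hv
      have g2 := geo τ' hv'
      unfold Agree at hagxw ⊢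
      omega
    · -- C2b : pick t ∈ S ∩ R
      obtain ⟨t, ht⟩ := hOv.1
      have htR : t ∈ R := (Finset.mem_inter.1 ht).1
      have htS : t ∈ S := (Finset.mem_inter.1 ht).2
      have htU : t ∈ U := hSU htS
      have htW : t ∈ Un l := mem_Un.2 ⟨S, hS, htS⟩
      have hxt_ne : x ≠ t := fun e => hxR (e ▸ htR)
      have hyt_ne : y ≠ t := fun e => hyW (e ▸ htW)
      have hagxt : Agree τ τ' x t := by
        by_cases hsxt : Fsame l x t
        · have h := Bpair U R S l τ τ' hrows hg hS hOv hv hv' hIH (Or.inl hanch)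
            t x htU hx (mem_Un.1 htW) hsxt.symm' htR hxR
          exact agree_symm h (fun e => hxt_ne (hv.1 htU hx e).symm)
            (fun e => hxt_ne (hv'.1 htU hx e).symm)
        · exact hIH x t ⟨hx, htU, hcx, mem_Un.1 htW, hsxt⟩
      have geo : ∀ π : α → ℕ, Valid U (R :: l) π →
          ((π x < π t ∧ π t < π y) ∨ (π y < π t ∧ π t < π x)) := by
        intro π hπ
        have hRc : ConvexIn U π (R : Set α) := hπ.2 R (List.mem_cons_self)
        have hWc : ConvexIn U π ((Un l : Finset α) : Set α) :=
          un_convex U l π hrt hgt (Valid_tail hπ)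
        obtain ⟨f1a, f1b⟩ := nb hRc htU hy hx htR hyR hxR
        obtain ⟨f2a, f2b⟩ := nb hWc hx htU hy hxW htW hyW
        have d1 : π x ≠ π y := fun h => hxy_ne (hπ.1 hx hy h)
        have d2 : π x ≠ π t := fun h => hxt_ne (hπ.1 hx htU h)
        have d3 : π y ≠ π t := fun h => hyt_ne (hπ.1 hy htU h)
        omega
      have g1 := geo τ hv
      have g2 := geo τ' hv'
      unfold Agree at hagxt ⊢
      omega
  rintro x y ⟨hx, hy, hcx, hcy, hns⟩
  have hloc : ∀ z, Fconstr (R :: l) z → z ∈ Un l ∨ (z ∈ R ∧ z ∉ Un l) := by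
    intro z hz
    by_cases hzW : z ∈ Un l
    · exact Or.inl hzW
    · obtain ⟨T, hT, hzT⟩ := hz
      rcases List.mem_cons.1 hT with rfl | hT'
      · exact Or.inr ⟨hzT, hzW⟩
      · exact absurd (mem_Un.2 ⟨T, hT', hzT⟩) hzW
  rcases hloc x hcx with hxW | ⟨hxR, hxW⟩
  · rcases hloc y hcy with hyW | ⟨hyR, hyW⟩
    · -- both in Un l
      by_cases hsxy : Fsame l x y
      · -- R separates them
        have hRsep : ¬(x ∈ R ↔ y ∈ R) := by
          intro h
          exact hns (fun T hT => by
            rcases List.mem_cons.1 hT with rfl | hT'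
            · exact h
            · exact hsxy T hT')
        have hxy_ne : x ≠ y := fun e => hns (e ▸ Fsame.refl' (R :: l) x)
        by_cases hxR : x ∈ R
        · have hyR : y ∉ R := fun h => hRsep ⟨fun _ => h, fun _ => hxR⟩
          exact Bpair U R S l τ τ' hrows hg hS hOv hv hv' hIH (Or.inl hanch)
            x y hx hy (mem_Un.1 hxW) hsxy hxR hyR
        · have hyR : y ∈ R := by
            by_contra hyR
            exact hRsep ⟨fun h => absurd h hxR, fun h => absurd h hyR⟩
          have h := Bpair U R S l τ τ' hrows hg hS hOv hv hv' hIH (Or.inl hanch)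
            y x hy hx (mem_Un.1 hyW) hsxy.symm' hyR hxR
          exact agree_symm h (fun e => hxy_ne (hv.1 hy hx e).symm)
            (fun e => hxy_ne (hv'.1 hy hx e).symm)
      · exact hIH x y ⟨hx, hy, mem_Un.1 hxW, mem_Un.1 hyW, hsxy⟩
    · exact hC x y hx hy hxW hyR hyW
  · rcases hloc y hcy with hyW | ⟨hyR, hyW⟩
    · have hxy_ne : x ≠ y := fun e => hxW (e ▸ hyW)
      have h := hC y x hy hx hyW hxR hxW
      exact agree_symm h (fun e => hxy_ne (hv.1 hy hx e).symm)
        (fun e => hxy_ne (hv'.1 hy hx e).symm)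
    · exfalso
      apply hns
      intro T hT
      rcases List.mem_cons.1 hT with rfl | hT'
      · exact ⟨fun _ => hyR, fun _ => hxR⟩
      · constructor
        · intro h; exact absurd (mem_Un.2 ⟨T, hT', h⟩) hxW
        · intro h; exact absurd (mem_Un.2 ⟨T, hT', h⟩) hyW


/-- L6: uniqueness up to reversal of the order of distinct-class constrained columns. -/
lemma dich (U : Finset α) : ∀ (l : List (Finset α)), (∀ T ∈ l, T ⊆ U) → Good l →
    ∀ τ τ', Valid U l τ → Valid U l τ' →
    (∀ x y, FPair U l x y → Agree τ τ' x y) ∨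
    (∀ x y, FPair U l x y → (τ x < τ y ↔ τ' y < τ' x)) := by
  intro l
  induction l with
  | nil =>
    intro _ _ τ τ' _ _
    left
    rintro x y ⟨_, _, ⟨T, hT, _⟩, _, _⟩
    simp at hT
  | cons R l ih =>
    intro hrows hg τ τ' hv hv'
    rcases hg.1 with rfl | ⟨S, hS, hOv⟩
    · -- singleton family : no pairs
      left
      rintro x y ⟨hx, hy, ⟨T, hT, hxT⟩, ⟨T', hT', hyT⟩, hns⟩
      exfalso
      simp only [List.mem_singleton] at hT hT'
      subst hT; subst hT'
      apply hns
      intro T hT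
      rcases List.mem_cons.1 hT with rfl | hT'
      · exact ⟨fun _ => hyT, fun _ => hxT⟩
      · simp at hT'
    · have hrt : ∀ T ∈ l, T ⊆ U := fun T hT => hrows T (List.mem_cons_of_mem _ hT)
      have hvt := Valid_tail hv
      have hvt' := Valid_tail hv'
      have hSU : S ⊆ U := hrows S (List.mem_cons_of_mem _ hS)
      have hRU : R ⊆ U := hrows R (List.mem_cons_self)
      set ρ := rev U τ' with hρdef
      have hvρ : Valid U (R :: l) ρ := rev_valid hv'
      have flipiff : ∀ x y : α, x ∈ U → y ∈ U → (ρ x < ρ y ↔ τ' y < τ' x) :=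
        fun x y hx hy => rev_lt hx hy
      by_cases hex : ∃ p q, FPair U l p q
      · rcases ih hrt hg.2 τ τ' hvt hvt' with hpres | hflip
        · left
          exact stepPres U R S l τ τ' hrows hg hS hOv hv hv' hpres
            (anchorFromIH U R S l τ τ' hrows hg hS hOv hv hv' hpres hex)
        · right
          have hIHρ : ∀ x y, FPair U l x y → Agree τ ρ x y := by
            intro x y hp
            unfold Agree
            rw [flipiff x y hp.1 hp.2.1]
            exact hflip x y hp
          have hres := stepPres U R S l τ ρ hrows hg hS hOv hv hvρ hIHρ
            (anchorFromIH U R S l τ ρ hrows hg hS hOv hv hvρ hIHρ hex)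
          intro x y hp
          have h2 := hres x y hp
          unfold Agree at h2
          rw [flipiff x y hp.1 hp.2.1] at h2
          exact h2
      · -- no tail pairs : anchor orientation decides everything
        have hIHtriv : ∀ (π : α → ℕ), ∀ x y, FPair U l x y → Agree τ π x y :=
          fun π x y hp => absurd ⟨x, y, hp⟩ hex
        obtain ⟨s₀, hs₀⟩ := hOv.1
        have hs₀R : s₀ ∈ R := (Finset.mem_inter.1 hs₀).1
        have hs₀S : s₀ ∈ S := (Finset.mem_inter.1 hs₀).2
        obtain ⟨w₀, hw₀S, hw₀R⟩ := Finset.not_subset.1 hOv.2.2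
        have hs₀U := hSU hs₀S
        have hw₀U := hSU hw₀S
        have hcored : ∀ (π : α → ℕ), Valid U (R :: l) π →
            ∀ u v, u ∈ S → u ∈ R → v ∈ S → v ∉ R → (π u < π v ↔ π s₀ < π w₀) := by
          intro π hπ u v huS huR hvS hvR
          exact core hπ.1 (hπ.2 R (List.mem_cons_self))
            (hπ.2 S (List.mem_cons_of_mem _ hS)) hRU hSU
            hOv u s₀ v w₀ huS huR hs₀S hs₀R hvS hvR hw₀S hw₀R
        by_cases hbit : (τ s₀ < τ w₀ ↔ τ' s₀ < τ' w₀)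
        · left
          apply stepPres U R S l τ τ' hrows hg hS hOv hv hv' (hIHtriv τ')
          intro u v huS huR hvS hvR
          unfold Agree
          rw [hcored τ hv u v huS huR hvS hvR, hcored τ' hv' u v huS huR hvS hvR]
          exact hbit
        · have hne' : τ' s₀ ≠ τ' w₀ := fun h =>
            hw₀R (hv'.1 hs₀U hw₀U h ▸ hs₀R)
          have hne : τ s₀ ≠ τ w₀ := fun h =>
            hw₀R (hv.1 hs₀U hw₀U h ▸ hs₀R)
          have hbitρ : (τ s₀ < τ w₀ ↔ ρ s₀ < ρ w₀) := by
            rw [flipiff s₀ w₀ hs₀U hw₀U]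
            omega
          have hres := stepPres U R S l τ ρ hrows hg hS hOv hv hvρ (hIHtriv ρ) (by
            intro u v huS huR hvS hvR
            unfold Agree
            rw [hcored τ hv u v huS huR hvS hvR, hcored ρ hvρ u v huS huR hvS hvR]
            exact hbitρ)
          right
          intro x y hp
          have h2 := hres x y hp
          unfold Agree at h2
          rw [flipiff x y hp.1 hp.2.1] at h2
          exact h2


end ZOZ

namespace ZOZ

variable {α : Type*} [DecidableEq α]

lemma cross {V : Type*} {G : SimpleGraph V} (B : Finset V) :
    ∀ {u v : V} (_ : G.Walk u v), u ∉ B → v ∈ B → ∃ x y, G.Adj x y ∧ x ∉ B ∧ y ∈ B := by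
  intro u v w
  induction w with
  | nil => intro h1 h2; exact absurd h2 h1
  | cons h p ih =>
    rename_i a b c
    intro h1 h2
    by_cases hb : b ∈ B
    · exact ⟨a, b, h, h1, hb⟩
    · exact ih hb h2

/-- Extraction of a chain-connected enumeration of the rows of a connected component. -/
lemma component_chain (𝓡 : Finset (Finset α)) (𝒞 : (overlapGraph 𝓡).ConnectedComponent)
    (R₀ : {R // R ∈ 𝓡}) (hR₀ : InComponent 𝓡 𝒞 R₀) :
    ∃ l : List (Finset α), Good l ∧
      (∀ T ∈ l, ∃ h : T ∈ 𝓡, InComponent 𝓡 𝒞 ⟨T, h⟩) ∧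
      (∀ v : {R // R ∈ 𝓡}, InComponent 𝓡 𝒞 v → v.1 ∈ l) := by
  classical
  set M : Finset {R // R ∈ 𝓡} := Finset.univ.filter (fun v => InComponent 𝓡 𝒞 v) with hM
  have hmemM : ∀ v : {R // R ∈ 𝓡}, v ∈ M ↔ InComponent 𝓡 𝒞 v := by
    intro v; simp [hM]
  have grow : ∀ (n : ℕ) (B : Finset {R // R ∈ 𝓡}), (M \ B).card ≤ n → B.Nonempty → B ⊆ M →
      (∃ l : List (Finset α), Good l ∧ (∀ T ∈ l, ∃ v : {R // R ∈ 𝓡}, v ∈ B ∧ v.1 = T) ∧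
        ∀ v ∈ B, v.1 ∈ l) →
      (∃ l : List (Finset α), Good l ∧ (∀ T ∈ l, ∃ v : {R // R ∈ 𝓡}, v ∈ M ∧ v.1 = T) ∧
        ∀ v ∈ M, v.1 ∈ l) := by
    intro n
    induction n with
    | zero =>
      intro B hcard hBne hBM ⟨l, hgl, hl1, hl2⟩
      have hBeq : B = M := Finset.Subset.antisymm hBM (by
        intro v hv
        by_contra hvB
        have : v ∈ M \ B := Finset.mem_sdiff.2 ⟨hv, hvB⟩
        have := Finset.card_pos.2 ⟨v, this⟩
        omega)
      subst hBeq
      exact ⟨l, hgl, hl1, hl2⟩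
    | succ n ih =>
      intro B hcard hBne hBM ⟨l, hgl, hl1, hl2⟩
      by_cases hfull : (M \ B).card = 0
      · have hBeq : B = M := Finset.Subset.antisymm hBM (by
          intro v hv
          by_contra hvB
          have : v ∈ M \ B := Finset.mem_sdiff.2 ⟨hv, hvB⟩
          have := Finset.card_pos.2 ⟨v, this⟩
          omega)
        subst hBeq
        exact ⟨l, hgl, hl1, hl2⟩
      · obtain ⟨r, hr⟩ := Finset.card_pos.1 (Nat.pos_of_ne_zero hfull)
        obtain ⟨hrM, hrB⟩ := Finset.mem_sdiff.1 hr
        obtain ⟨b₀, hb₀⟩ := hBne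
        have hreach : (overlapGraph 𝓡).Reachable r b₀ := by
          apply SimpleGraph.ConnectedComponent.exact
          rw [show (overlapGraph 𝓡).connectedComponentMk r = 𝒞 from (hmemM r).1 hrM,
            show (overlapGraph 𝓡).connectedComponentMk b₀ = 𝒞 from (hmemM b₀).1 (hBM hb₀)]
        obtain ⟨w⟩ := hreach
        obtain ⟨x, y, hadj, hxB, hyB⟩ := cross B w hrB hb₀
        have hxM : x ∈ M := by
          rw [hmemM]
          rw [show (InComponent 𝓡 𝒞 x) = ((overlapGraph 𝓡).connectedComponentMk x = 𝒞)
            from rfl]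
          rw [SimpleGraph.ConnectedComponent.sound hadj.reachable]
          exact (hmemM y).1 (hBM hyB)
        apply ih (insert x B)
        · have hsub : M \ insert x B ⊆ (M \ B).erase x := by
            intro v hv
            obtain ⟨h1, h2⟩ := Finset.mem_sdiff.1 hv
            simp only [Finset.mem_insert, not_or] at h2
            exact Finset.mem_erase.2 ⟨h2.1, Finset.mem_sdiff.2 ⟨h1, h2.2⟩⟩
          have h1 := Finset.card_le_card hsub
          have h2 := Finset.card_erase_of_mem (Finset.mem_sdiff.2 ⟨hxM, hxB⟩)
          omega
        · exact ⟨x, Finset.mem_insert_self _ _⟩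
        · exact Finset.insert_subset hxM hBM
        · refine ⟨x.1 :: l, ⟨Or.inr ⟨y.1, hl2 y hyB, hadj⟩, hgl⟩, ?_, ?_⟩
          · intro T hT
            rcases List.mem_cons.1 hT with rfl | hT'
            · exact ⟨x, Finset.mem_insert_self _ _, rfl⟩
            · obtain ⟨v, hv1, hv2⟩ := hl1 T hT'
              exact ⟨v, Finset.mem_insert_of_mem hv1, hv2⟩
          · intro v hv
            rcases Finset.mem_insert.1 hv with rfl | hv'
            · exact List.mem_cons_self
            · exact List.mem_cons_of_mem _ (hl2 v hv')
  have hseed := grow (M \ {R₀}).card {R₀} le_rfl ⟨R₀, Finset.mem_singleton_self _⟩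
    (by intro v hv; rw [Finset.mem_singleton.1 hv, hmemM]; exact hR₀)
    ⟨[R₀.1], ⟨Or.inl rfl, trivial⟩,
      by
        intro T hT
        rcases List.mem_singleton.1 hT with rfl
        exact ⟨R₀, Finset.mem_singleton_self _, rfl⟩,
      by
        intro v hv
        rw [Finset.mem_singleton.1 hv]
        exact List.mem_cons_self⟩
  obtain ⟨l, hgl, hl1, hl2⟩ := hseed
  refine ⟨l, hgl, ?_, fun v hv => hl2 v ((hmemM v).2 hv)⟩
  intro T hT
  obtain ⟨v, hvM, rfl⟩ := hl1 T hT
  exact ⟨v.2, by have := (hmemM v).1 hvM; exact this⟩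

end ZOZ


/-- If `𝓡'` has the consecutive-ones property over `U`, `𝒞` is a
connected component of its overlap graph with union `Q`, `Z` is not a subset of `Q`,
and some consecutive-ones ordering `σ` places columns `a, b, c` of three pairwise
distinct constrained Venn classes of `𝒞` in positions `σ a < σ b < σ c` with
`a ∉ Z`, `b ∈ Z`, `c ∉ Z` (a 0-1-0 configuration for `Z`), then `𝓡' ∪ {Z}` does not
have the consecutive-ones property. -/
theorem zero_one_zero_violation {α : Type*} [DecidableEq α]
    (U : Finset α) (𝓡' : Finset (Finset α)) (hsub : ∀ R ∈ 𝓡', R ⊆ U)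
    (𝒞 : (overlapGraph 𝓡').ConnectedComponent)
    (Z : Finset α) (hZU : Z ⊆ U)
    (hZQ : ¬ ((Z : Set α) ⊆ {c : α | ∃ R, InComponent 𝓡' 𝒞 R ∧ c ∈ R.1}))
    (σ : α → ℕ) (hσ : IsC1POrdering U 𝓡' σ)
    (a b c : α) (ha : a ∈ U) (hb : b ∈ U) (hc : c ∈ U)
    (hcona : ConstrainedCol 𝓡' 𝒞 a) (hconb : ConstrainedCol 𝓡' 𝒞 b)
    (hconc : ConstrainedCol 𝓡' 𝒞 c)
    (hab : ¬ SameVennClass 𝓡' 𝒞 a b) (hbc : ¬ SameVennClass 𝓡' 𝒞 b c)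
    (hac : ¬ SameVennClass 𝓡' 𝒞 a c)
    (horder : σ a < σ b ∧ σ b < σ c)
    (haZ : a ∉ Z) (hbZ : b ∈ Z) (hcZ : c ∉ Z) :
    ¬ HasC1P U (insert Z 𝓡') := by
  classical
  rintro ⟨τ, hτinj, hτconv⟩
  have hcona' := hcona
  obtain ⟨R₀, hR₀c, -⟩ := hcona'
  obtain ⟨l, hgl, hl1, hl2⟩ := ZOZ.component_chain 𝓡' 𝒞 R₀ hR₀c
  have hrows : ∀ T ∈ l, T ⊆ U := fun T hT => hsub T (Exists.choose (hl1 T hT))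
  have hsame_iff : ∀ x y : α, ZOZ.Fsame l x y ↔ SameVennClass 𝓡' 𝒞 x y := by
    intro x y
    constructor
    · intro h R hRc
      exact h R.1 (hl2 R hRc)
    · intro h T hT
      obtain ⟨hm, hcmp⟩ := hl1 T hT
      exact h ⟨T, hm⟩ hcmp
  have hconstr_iff : ∀ x : α, ZOZ.Fconstr l x ↔ ConstrainedCol 𝓡' 𝒞 x := by
    intro x
    constructor
    · rintro ⟨T, hT, hxT⟩
      obtain ⟨hm, hcmp⟩ := hl1 T hT
      exact ⟨⟨T, hm⟩, hcmp, hxT⟩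
    · rintro ⟨R, hRc, hxR⟩
      exact ⟨R.1, hl2 R hRc, hxR⟩
  have hvσ : ZOZ.Valid U l σ := ⟨hσ.1, fun T hT => hσ.2 T (Exists.choose (hl1 T hT))⟩
  have hvτ : ZOZ.Valid U l τ :=
    ⟨hτinj, fun T hT => hτconv T (Finset.mem_insert_of_mem (Exists.choose (hl1 T hT)))⟩
  have hpab : ZOZ.FPair U l a b :=
    ⟨ha, hb, (hconstr_iff a).2 hcona, (hconstr_iff b).2 hconb,
      fun h => hab ((hsame_iff a b).1 h)⟩
  have hpbc : ZOZ.FPair U l b c :=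
    ⟨hb, hc, (hconstr_iff b).2 hconb, (hconstr_iff c).2 hconc,
      fun h => hbc ((hsame_iff b c).1 h)⟩
  obtain ⟨z, hzZ, hzQ⟩ := Set.not_subset.1 hZQ
  have hzZ' : z ∈ Z := hzZ
  have hzU : z ∈ U := hZU hzZ'
  have hzW : z ∉ ZOZ.Un l := by
    intro h
    obtain ⟨T, hT, hzT⟩ := ZOZ.mem_Un.1 h
    obtain ⟨hm, hcmp⟩ := hl1 T hT
    exact hzQ ⟨⟨T, hm⟩, hcmp, hzT⟩
  have haW : a ∈ ZOZ.Un l := ZOZ.Fconstr_mem_Un ((hconstr_iff a).2 hcona)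
  have hbW : b ∈ ZOZ.Un l := ZOZ.Fconstr_mem_Un ((hconstr_iff b).2 hconb)
  have hcW : c ∈ ZOZ.Un l := ZOZ.Fconstr_mem_Un ((hconstr_iff c).2 hconc)
  have hWc := ZOZ.un_convex U l τ hrows hgl hvτ
  have hZc : ConvexIn U τ (Z : Set α) := hτconv Z (Finset.mem_insert_self _ _)
  have hnz1 : ¬(τ a ≤ τ z ∧ τ z ≤ τ c) :=
    fun ⟨p, q⟩ => hzW (hWc a ha z hzU c hc p q haW hcW)
  have hnz2 : ¬(τ c ≤ τ z ∧ τ z ≤ τ a) :=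
    fun ⟨p, q⟩ => hzW (hWc c hc z hzU a ha p q hcW haW)
  have hA1 : ¬(τ z ≤ τ a ∧ τ a ≤ τ b) :=
    fun ⟨p, q⟩ => haZ (hZc z hzU a ha b hb p q hzZ' hbZ)
  have hA2 : ¬(τ b ≤ τ a ∧ τ a ≤ τ z) :=
    fun ⟨p, q⟩ => haZ (hZc b hb a ha z hzU p q hbZ hzZ')
  have hC1 : ¬(τ z ≤ τ c ∧ τ c ≤ τ b) :=
    fun ⟨p, q⟩ => hcZ (hZc z hzU c hc b hb p q hzZ' hbZ)
  have hC2 : ¬(τ b ≤ τ c ∧ τ c ≤ τ z) :=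
    fun ⟨p, q⟩ => hcZ (hZc b hb c hc z hzU p q hbZ hzZ')
  have horder2 : (τ a < τ b ∧ τ b < τ c) ∨ (τ b < τ a ∧ τ c < τ b) := by
    rcases ZOZ.dich U l hrows hgl σ τ hvσ hvτ with hpres | hflip
    · exact Or.inl ⟨(hpres a b hpab).1 horder.1, (hpres b c hpbc).1 horder.2⟩
    · exact Or.inr ⟨(hflip a b hpab).1 horder.1, (hflip b c hpbc).1 horder.2⟩
  omega
end

section
/- Let G be a finite chordal graph with at least one vertex, let T be a clique tree of G, and let K be a maximal clique of G that is a leaf of T (a node with at most one neighbor in T). Then K contains a simplicial vertex of G. -/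
/-- A vertex is *simplicial* if its neighbors are pairwise adjacent. -/
def IsSimplicial {V : Type*} (G : SimpleGraph V) (v : V) : Prop :=
  ∀ x y, G.Adj v x → G.Adj v y → x ≠ y → G.Adj x y

/-- A graph is *chordal* if it has no induced cycle of length at least 4,
i.e., no cycle graph on `n ≥ 4` vertices embeds in it as an induced subgraph. -/
def IsChordal {V : Type*} (G : SimpleGraph V) : Prop :=
  ∀ n : ℕ, 4 ≤ n → IsEmpty (SimpleGraph.cycleGraph n ↪g G)

/-- A *clique tree* of `G` is a tree `T` on the maximal cliques of `G` such that,
for every vertex `v`, the maximal cliques containing `v` induce a connected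
subgraph of `T`. -/
def IsCliqueTree {V : Type*} (G : SimpleGraph V)
    (T : SimpleGraph {K : Finset V // Maximal G.IsClique (K : Set V)}) : Prop :=
  T.IsTree ∧ ∀ v : V, (T.induce {K | v ∈ K.1}).Connected

/-- Every clique (given as a finset) extends to a maximal clique. -/
lemma exists_maximal_clique_superset {V : Type*} [Fintype V] (G : SimpleGraph V)
    (s : Finset V) (hs : G.IsClique (s : Set V)) :
    ∃ M : Finset V, s ⊆ M ∧ Maximal G.IsClique (M : Set V) := by
  classical
  obtain ⟨M, hsM, hM⟩ :=
    Finite.exists_le_maximal (p := fun t : Finset V => G.IsClique (t : Set V)) hs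
  refine ⟨M, hsM, hM.1, ?_⟩
  intro t ht hMt
  have htfin : t.Finite := Set.toFinite t
  have h1 : M ⊆ htfin.toFinset := by
    intro a ha
    simpa using hMt (by simpa using ha)
  have h2 : htfin.toFinset ⊆ M := hM.2 (by simpa using ht) h1
  intro a ha
  simpa using h2 (by simpa using ha)

/-- If `G` is a finite chordal graph with at least one vertex,
`T` a clique tree of `G`, and `K` a maximal clique of `G` that is a leaf of `T`
(at most one neighbor in `T`), then `K` contains a simplicial vertex of `G`. -/
theorem leaf_clique_contains_simplicial {V : Type*} [Fintype V] [Nonempty V]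
    (G : SimpleGraph V) (hG : IsChordal G)
    (T : SimpleGraph {K : Finset V // Maximal G.IsClique (K : Set V)})
    (hT : IsCliqueTree G T)
    (K : {K : Finset V // Maximal G.IsClique (K : Set V)})
    (hleaf : (T.neighborSet K).Subsingleton) :
    ∃ v ∈ K.1, IsSimplicial G v := by
  classical
  obtain ⟨hTtree, hTconn⟩ := hT
  -- K is nonempty
  have hKne : K.1.Nonempty := by
    by_contra h
    rw [Finset.not_nonempty_iff_eq_empty] at h
    obtain ⟨w⟩ := ‹Nonempty V›
    have hclique : G.IsClique ({w} : Set V) := by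
      intro a ha b hb hab
      simp only [Set.mem_singleton_iff] at ha hb
      exact absurd (ha.trans hb.symm) hab
    have hsub : (K.1 : Set V) ⊆ {w} := by simp [h]
    have := K.2.2 hclique hsub (Set.mem_singleton w)
    simp [h] at this
  -- pick v ∈ K not in any neighbor of K
  obtain ⟨v, hvK, hv⟩ : ∃ v ∈ K.1, ∀ J, T.Adj K J → v ∉ J.1 := by
    rcases Set.eq_empty_or_nonempty (T.neighborSet K) with he | ⟨K', hK'⟩
    · obtain ⟨v, hvK⟩ := hKne
      refine ⟨v, hvK, fun J hJ _ => ?_⟩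
      have : J ∈ T.neighborSet K := hJ
      simp [he] at this
    · have hK'adj : T.Adj K K' := hK'
      have hne : K ≠ K' := T.ne_of_adj hK'adj
      have hnsub : ¬ K.1 ⊆ K'.1 := by
        intro hsub
        apply hne
        apply Subtype.ext
        have h1 : (K.1 : Set V) ⊆ (K'.1 : Set V) := by exact_mod_cast hsub
        have h2 := K.2.2 K'.2.1 h1
        exact_mod_cast subset_antisymm h1 h2
      obtain ⟨v, hvK, hvK'⟩ := Finset.not_subset.1 hnsub
      refine ⟨v, hvK, fun J hJ hvJ => ?_⟩
      have hJK' : K' = J := hleaf hK' hJ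
      exact hvK' (hJK' ▸ hvJ)
  -- every maximal clique containing v is K itself
  have key : ∀ L : {K : Finset V // Maximal G.IsClique (K : Set V)}, v ∈ L.1 → L = K := by
    intro L hvL
    obtain ⟨p⟩ := (hTconn v) ⟨K, hvK⟩ ⟨L, hvL⟩
    suffices H : ∀ (a b : ↥{J : {K : Finset V // Maximal G.IsClique (K : Set V)} | v ∈ J.1})
        (_ : (T.induce {J | v ∈ J.1}).Walk a b), a.1 = K → b.1 = K by
      exact H _ _ p rfl
    intro a b p
    induction p with
    | nil => exact id
    | @cons a c b h q ih =>
      intro ha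
      have hadj : T.Adj a.1 c.1 := h
      rw [ha] at hadj
      exact absurd c.2 (hv c.1 hadj)
  refine ⟨v, hvK, fun x y hvx hvy hxy => ?_⟩
  have hmem : ∀ z, G.Adj v z → z ∈ K.1 := by
    intro z hvz
    have hcl : G.IsClique (({v, z} : Finset V) : Set V) := by
      intro a ha b hb hab
      simp only [Finset.coe_insert, Finset.coe_singleton, Set.mem_insert_iff,
        Set.mem_singleton_iff] at ha hb
      rcases ha with rfl | rfl <;> rcases hb with rfl | rfl
      · exact absurd rfl hab
      · exact hvz
      · exact hvz.symm
      · exact absurd rfl hab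
    obtain ⟨M, hsub, hmax⟩ := exists_maximal_clique_superset G {v, z} hcl
    have hMK : (⟨M, hmax⟩ : {K : Finset V // Maximal G.IsClique (K : Set V)}) = K :=
      key ⟨M, hmax⟩ (hsub (by simp))
    have hzM : z ∈ M := hsub (by simp)
    have : M = K.1 := congrArg Subtype.val hMK
    exact this ▸ hzM
  exact K.2.1 (by exact_mod_cast hmem x hvx) (by exact_mod_cast hmem y hvy) hxy
end

section
/- Let G be a finite chordal graph, let T be a clique tree of G with at least two nodes, let K be a leaf of T, and let S be the set of simplicial vertices of G that belong to K. Then S is nonempty, the maximal cliques of the induced subgraph G − S (the subgraph induced on V(G) ∖ S) are exactly the maximal cliques of G other than K, and the tree obtained from T by deleting the leaf K is a clique tree of G − S. -/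
/-- `C` is a maximal clique of the subgraph of `G` induced on the vertex set `A`:
`C` is a clique of `G` inside `A` not properly contained in another such clique. -/
def IsMaxCliqueWithin {V : Type*} (G : SimpleGraph V) (A : Set V) (C : Finset V) : Prop :=
  (C : Set V) ⊆ A ∧ G.IsClique (C : Set V) ∧
    ∀ D : Finset V, (D : Set V) ⊆ A → G.IsClique (D : Set V) → C ⊆ D → D = C

open SimpleGraph


/-- Lift a walk in `T.induce A` whose support lies in `B` to reachability in `T.induce B`. -/
lemma reachable_induce_of_support {W : Type*} (T : SimpleGraph W) (A B : Set W) :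
    ∀ {x y : ↑A} (p : (T.induce A).Walk x y),
      (∀ z ∈ p.support, z.val ∈ B) → ∀ (hx : x.val ∈ B) (hy : y.val ∈ B),
      (T.induce B).Reachable ⟨x.val, hx⟩ ⟨y.val, hy⟩ := by
  intro x y p
  induction p with
  | nil => intro _ hx hy; rfl
  | cons h p ih =>
      intro hsup hx hy
      rename_i u v w
      have hv : v.val ∈ B := hsup v (by simp [Walk.support_cons])
      have hadj : (T.induce B).Adj ⟨u.val, hx⟩ ⟨v.val, hv⟩ := by
        simpa using (by simpa using h : T.Adj u.val v.val)
      exact (hadj.reachable).trans (ih (fun z hz => hsup z (by simp [Walk.support_cons, hz])) hv hy)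

/-- A path in `T.induce A` between vertices different from a leaf `K` of `T`
avoids `K`. -/
lemma path_avoids_leaf {W : Type*} {T : SimpleGraph W} {K : W}
    (hleaf : (T.neighborSet K).Subsingleton) {A : Set W} {a b : ↑A}
    (p : (T.induce A).Walk a b) (hp : p.IsPath) (ha : a.val ≠ K) (hb : b.val ≠ K) :
    ∀ z ∈ p.support, z.val ≠ K := by
  classical
  intro z hz hzK
  have haz : a ≠ z := fun h => ha (h ▸ hzK)
  have hbz : z ≠ b := fun h => hb (hzK ▸ congrArg Subtype.val h.symm)
  set q := p.takeUntil z hz with hqdef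
  set r := p.dropUntil z hz with hrdef
  have hspec : q.append r = p := p.take_spec hz
  have hq : q.IsPath := hp.takeUntil hz
  have hr : r.IsPath := hp.dropUntil hz
  have hqn : ¬ q.reverse.Nil := Walk.not_nil_of_ne haz.symm
  have hrn : ¬ r.Nil := Walk.not_nil_of_ne hbz
  obtain ⟨u1, h1, q', hq'⟩ := Walk.not_nil_iff.mp hqn
  obtain ⟨u2, h2, r', hr'⟩ := Walk.not_nil_iff.mp hrn
  -- u1 and u2 are neighbors of K in T
  have hu1 : u1.val ∈ T.neighborSet K := by
    have : T.Adj z.val u1.val := by simpa using h1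
    rw [hzK] at this; exact this
  have hu2 : u2.val ∈ T.neighborSet K := by
    have : T.Adj z.val u2.val := by simpa using h2
    rw [hzK] at this; exact this
  have hu12 : u1 = u2 := Subtype.ext ((hleaf hu1 hu2))
  -- u1 is in q.support
  have hu1q : u1 ∈ q.support := by
    have : u1 ∈ q.reverse.support := by
      rw [hq']; simp [Walk.support_cons]
    simpa [Walk.support_reverse] using this
  -- u2 is in r.support.tail
  have hu2r : u2 ∈ r.support.tail := by
    rw [hr']; simp [Walk.support_cons]
  -- contradiction with nodup of p.support
  have hnodup : (q.support ++ r.support.tail).Nodup := by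
    rw [← Walk.support_append, hspec]; exact hp.support_nodup
  exact (List.disjoint_of_nodup_append hnodup) hu1q (hu12 ▸ hu2r)

/-- Removing a leaf `K` of `T` from a connected induced subgraph keeps it connected. -/
lemma connected_induce_diff {W : Type*} {T : SimpleGraph W} {K : W}
    (hleaf : (T.neighborSet K).Subsingleton) {A : Set W}
    (hA : (T.induce A).Connected) (hne : ∃ x, x ∈ A ∧ x ≠ K) :
    (T.induce (A \ {K})).Connected := by
  classical
  rw [connected_iff]
  obtain ⟨x0, hx0A, hx0K⟩ := hne
  refine ⟨fun x y => ?_, ⟨⟨x0, hx0A, hx0K⟩⟩⟩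
  obtain ⟨w⟩ := hA.preconnected ⟨x.val, x.2.1⟩ ⟨y.val, y.2.1⟩
  set p := w.toPath
  have hxK : x.val ∉ ({K} : Set W) := x.2.2
  have hyK : y.val ∉ ({K} : Set W) := y.2.2
  have havoid := path_avoids_leaf hleaf p.val p.2 (by simpa using hxK) (by simpa using hyK)
  have hsup : ∀ z ∈ p.val.support, z.val ∈ A \ {K} :=
    fun z hz => ⟨z.2, havoid z hz⟩
  have := reachable_induce_of_support T A (A \ {K}) p.val hsup ⟨x.2.1, hxK⟩ ⟨y.2.1, hyK⟩
  simpa using this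

/-- Let `G` be a finite chordal graph, `T` a clique tree of `G` with at
least two nodes, `K` a leaf of `T`, and `S` the set of simplicial vertices of `G` lying
in `K`.  Then `S` is nonempty; the maximal cliques of `G − S` are exactly the maximal
cliques of `G` other than `K`; and deleting the leaf `K` from `T` yields a clique tree
of `G − S`. -/
theorem shrink_clique_tree {V : Type*} [Fintype V]
    (G : SimpleGraph V) (hG : IsChordal G)
    (T : SimpleGraph {K : Finset V // Maximal G.IsClique (K : Set V)})
    (hT : IsCliqueTree G T)
    (K : {K : Finset V // Maximal G.IsClique (K : Set V)})
    (htwo : ∃ K' : {K : Finset V // Maximal G.IsClique (K : Set V)}, K' ≠ K)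
    (hleaf : (T.neighborSet K).Subsingleton)
    (S : Set V) (hS : S = {v : V | v ∈ K.1 ∧ IsSimplicial G v}) :
    S.Nonempty ∧
      (∀ C : Finset V,
        IsMaxCliqueWithin G {v : V | v ∉ S} C ↔ (Maximal G.IsClique (C : Set V) ∧ C ≠ K.1)) ∧
      (T.induce {L | L ≠ K}).IsTree ∧
      (∀ v : V, v ∉ S → (T.induce {L | L ≠ K ∧ v ∈ L.1}).Connected) := by
  classical
  obtain ⟨hTree, hConnV⟩ := hT
  -- every clique extends to a maximal clique
  have extend : ∀ C : Finset V, G.IsClique (C : Set V) →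
      ∃ M : Finset V, C ⊆ M ∧ Maximal G.IsClique (M : Set V) := by
    intro C hC
    obtain ⟨M, hCM, hM⟩ :=
      Finite.exists_le_maximal (p := fun D : Finset V => G.IsClique (D : Set V)) hC
    refine ⟨M, hCM, hM.1, ?_⟩
    intro s hs hMs
    have hfin : s.Finite := Set.toFinite s
    have h1 : M ⊆ hfin.toFinset := by
      intro x hx; rw [Set.Finite.mem_toFinset]; exact hMs hx
    have h2 : hfin.toFinset ⊆ M :=
      hM.2 (by simpa using hs) h1
    intro x hx
    have : x ∈ hfin.toFinset := by rw [Set.Finite.mem_toFinset]; exact hx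
    exact h2 this
  -- K has a (unique) neighbor K'
  obtain ⟨K0, hK0⟩ := htwo
  obtain ⟨w0⟩ := hTree.isConnected.preconnected K K0
  have hw0 : ¬ w0.Nil := Walk.not_nil_of_ne (fun h => hK0 h.symm)
  obtain ⟨K', hadj, -, -⟩ := Walk.not_nil_iff.mp hw0
  have hK'K : K' ≠ K := hadj.ne'
  have hK'nb : K' ∈ T.neighborSet K := hadj
  -- a simplicial vertex of K lies in no other maximal clique
  have uniq : ∀ v : V, v ∈ K.1 → IsSimplicial G v →
      ∀ L : Finset V, Maximal G.IsClique (L : Set V) → v ∈ L → L = K.1 := by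
    intro v hvK hvs L hL hvL
    set N : Set V := {x | x = v ∨ G.Adj v x} with hN
    have hNc : G.IsClique N := by
      intro x hx y hy hxy
      rcases hx with rfl | hx
      · rcases hy with rfl | hy
        · exact absurd rfl hxy
        · exact hy
      · rcases hy with rfl | hy
        · exact hx.symm
        · exact hvs x y hx hy hxy
    have hsubK : (K.1 : Set V) ⊆ N := by
      intro x hx
      by_cases hxv : x = v
      · exact Or.inl hxv
      · exact Or.inr (K.2.1 (by exact_mod_cast hvK) hx (Ne.symm hxv))
    have hKN : N ⊆ (K.1 : Set V) := K.2.2 hNc hsubK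
    have hsubL : (L : Set V) ⊆ N := by
      intro x hx
      by_cases hxv : x = v
      · exact Or.inl hxv
      · exact Or.inr (hL.1 (by exact_mod_cast hvL) hx (Ne.symm hxv))
    have hLK : (L : Set V) ⊆ (K.1 : Set V) := hsubL.trans hKN
    have hKL : (K.1 : Set V) ⊆ (L : Set V) := hL.2 K.2.1 hLK
    exact Finset.coe_injective (le_antisymm hLK hKL)
  -- every neighbor of a vertex of K ∖ K' lies in K
  have nbrK : ∀ v : V, v ∈ K.1 → v ∉ K'.1 → ∀ w : V, G.Adj v w → w ∈ K.1 := by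
    intro v hvK hvK' w hvw
    have hpair : G.IsClique ({v, w} : Set V) := by
      intro x hx y hy hxy
      rcases hx with rfl | hx
      · rcases hy with rfl | hy
        · exact absurd rfl hxy
        · rw [Set.mem_singleton_iff] at hy; subst hy; exact hvw
      · rw [Set.mem_singleton_iff] at hx; subst hx
        rcases hy with rfl | hy
        · exact hvw.symm
        · rw [Set.mem_singleton_iff] at hy; subst hy; exact absurd rfl hxy
    obtain ⟨M, hsub, hM⟩ := extend {v, w} (by simpa using hpair)
    have hvM : v ∈ M := hsub (by simp)
    have hwM : w ∈ M := hsub (by simp)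
    by_contra hwK
    have hMne : M ≠ K.1 := fun h => hwK (h ▸ hwM)
    obtain ⟨wlk⟩ := (hConnV v).preconnected
      (⟨K, hvK⟩ : ↑{L : {K : Finset V // Maximal G.IsClique (K : Set V)} | v ∈ L.1})
      ⟨⟨M, hM⟩, hvM⟩
    have hne2 : (⟨K, hvK⟩ : ↑{L : {K : Finset V // Maximal G.IsClique (K : Set V)} | v ∈ L.1})
        ≠ ⟨⟨M, hM⟩, hvM⟩ := by
      intro h
      exact hMne (congrArg (fun z => z.val.val) h).symm
    have hnil : ¬ wlk.Nil := Walk.not_nil_of_ne hne2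
    obtain ⟨N, hNadj, -, -⟩ := Walk.not_nil_iff.mp hnil
    have hTN : T.Adj K N.val := by simpa using hNadj
    have hNK' : N.val = K' := hleaf hTN hK'nb
    have : v ∈ K'.1 := by rw [← hNK']; exact N.2
    exact hvK' this
  have simpl : ∀ v, v ∈ K.1 → v ∉ K'.1 → IsSimplicial G v := by
    intro v hvK hvK' x y hx hy hxy
    exact K.2.1 (by exact_mod_cast nbrK v hvK hvK' x hx)
      (by exact_mod_cast nbrK v hvK hvK' y hy) hxy
  have hSK : ∀ v ∈ S, v ∈ K.1 := by intro v hv; rw [hS] at hv; exact hv.1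
  have hSK' : ∀ v ∈ S, v ∉ K'.1 := by
    intro v hv hvK'
    rw [hS] at hv
    exact hK'K (Subtype.ext (uniq v hv.1 hv.2 K'.1 K'.2 hvK'))
  have hKnotsub : ¬ (K.1 : Set V) ⊆ (K'.1 : Set V) := by
    intro h
    have h2 : (K'.1 : Set V) ⊆ (K.1 : Set V) := K.2.2 K'.2.1 h
    exact hK'K (Subtype.ext (Finset.coe_injective (le_antisymm h2 h)))
  obtain ⟨v0, hv0K, hv0K'⟩ : ∃ v, v ∈ K.1 ∧ v ∉ K'.1 := by
    by_contra h
    push_neg at h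
    exact hKnotsub (fun x hx => by
      exact_mod_cast h x (by exact_mod_cast hx))
  have hSne : S.Nonempty := ⟨v0, by rw [hS]; exact ⟨hv0K, simpl v0 hv0K hv0K'⟩⟩
  have havoidS : ∀ L : Finset V, Maximal G.IsClique (L : Set V) → L ≠ K.1 →
      ∀ v ∈ S, v ∉ L := by
    intro L hL hLne v hvS hvL
    rw [hS] at hvS
    exact hLne (uniq v hvS.1 hvS.2 L hL hvL)
  have hK'mem : ∀ v, v ∈ K.1 → v ∉ S → v ∈ K'.1 := by
    intro v hvK hvS
    by_contra h
    exact hvS (by rw [hS]; exact ⟨hvK, simpl v hvK h⟩)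
  -- part 2
  have part2 : ∀ C : Finset V,
      IsMaxCliqueWithin G {v | v ∉ S} C ↔ (Maximal G.IsClique (C : Set V) ∧ C ≠ K.1) := by
    intro C
    constructor
    · rintro ⟨hCsub, hCcl, hCmax⟩
      obtain ⟨s0, hs0⟩ := hSne
      have hs0C : s0 ∉ C := fun h => (hCsub (Finset.mem_coe.mpr h)) hs0
      have hCneK : C ≠ K.1 := fun h => hs0C (h ▸ hSK s0 hs0)
      obtain ⟨M, hCM, hM⟩ := extend C hCcl
      by_cases hMK : M = K.1
      · have hCK' : C ⊆ K'.1 := by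
          intro x hx
          exact hK'mem x (by rw [← hMK]; exact hCM hx) (hCsub (Finset.mem_coe.mpr hx))
        have hK'C : K'.1 = C :=
          hCmax K'.1 (fun x hx hxS => hSK' x hxS (Finset.mem_coe.mp hx)) K'.2.1 hCK'
        rw [← hK'C]
        exact ⟨K'.2, fun h => hK'K (Subtype.ext h)⟩
      · have hMsub : (M : Set V) ⊆ {v | v ∉ S} :=
          fun x hx hxS => havoidS M hM hMK x hxS (Finset.mem_coe.mp hx)
        have hMC : M = C := hCmax M hMsub hM.1 hCM
        rw [← hMC]
        exact ⟨hM, hMK⟩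
    · rintro ⟨hCmax, hCne⟩
      refine ⟨fun x hx hxS => havoidS C hCmax hCne x hxS (Finset.mem_coe.mp hx), hCmax.1, ?_⟩
      intro D hDsub hDcl hCD
      have hDC : (D : Set V) ⊆ (C : Set V) := hCmax.2 hDcl (Finset.coe_subset.mpr hCD)
      exact Finset.Subset.antisymm (Finset.coe_subset.mp hDC) hCD
  -- part 3 : tree
  have hunivconn : (T.induce (Set.univ : Set _)).Connected :=
    (Iso.connected_iff (induceUnivIso T)).mpr hTree.isConnected
  have hsetEq : {L : {K : Finset V // Maximal G.IsClique (K : Set V)} | L ≠ K}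
      = ((Set.univ : Set _) \ {K}) := by
    ext L; simp
  have hconn3 : (T.induce {L | L ≠ K}).Connected := by
    rw [hsetEq]
    exact connected_induce_diff hleaf hunivconn ⟨K', trivial, hK'K⟩
  have hacy : (T.induce {L | L ≠ K}).IsAcyclic := by
    intro v c hc
    have hinj : Function.Injective
        ((Embedding.comap (Function.Embedding.subtype
          (fun L : {K : Finset V // Maximal G.IsClique (K : Set V)} => L ∈ {L | L ≠ K})) T).toHom) :=
      Subtype.val_injective
    exact hTree.IsAcyclic _ ((Walk.map_isCycle_iff_of_injective hinj).mpr hc)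
  -- part 4
  have part4 : ∀ v : V, v ∉ S → (T.induce {L | L ≠ K ∧ v ∈ L.1}).Connected := by
    intro v hv
    have hsetEq2 : {L : {K : Finset V // Maximal G.IsClique (K : Set V)} | L ≠ K ∧ v ∈ L.1}
        = ({L | v ∈ L.1} \ {K}) := by
      ext L; simp [and_comm]
    rw [hsetEq2]
    refine connected_induce_diff hleaf (hConnV v) ?_
    by_cases hvK : v ∈ K.1
    · exact ⟨K', hK'mem v hvK hv, hK'K⟩
    · have hsing : G.IsClique (({v} : Finset V) : Set V) := by
        simpa using Set.pairwise_singleton v G.Adj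
      obtain ⟨M, hsub, hM⟩ := extend {v} hsing
      have hvM : v ∈ M := hsub (by simp)
      exact ⟨⟨M, hM⟩, hvM, fun h => hvK (congrArg Subtype.val h ▸ hvM)⟩
  exact ⟨hSne, part2, ⟨hconn3, hacy⟩, part4⟩
end

section
/- Let G be a finite chordal graph, let T be a clique tree of G, and let X be a nonempty set of vertices of G such that the induced subgraph G[X] is connected. Then the set of maximal cliques K of G with K ∩ X ≠ ∅ induces a connected subgraph (a subtree) of T. -/
/-- Any clique of a finite graph extends to a maximal clique. -/
lemma exists_max_clique {V : Type*} [Fintype V] {G : SimpleGraph V}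
    (s : Finset V) (hs : G.IsClique (s : Set V)) :
    ∃ K : {K : Finset V // Maximal G.IsClique (K : Set V)}, s ⊆ K.1 := by
  classical
  obtain ⟨K, hsK, hK⟩ := Finite.exists_le_maximal
    (p := fun K : Finset V => G.IsClique (K : Set V)) hs
  refine ⟨⟨K, hK.1, ?_⟩, hsK⟩
  intro t ht hKt x hx
  have hins : G.IsClique ((insert x K : Finset V) : Set V) := by
    rw [Finset.coe_insert]
    exact ht.subset (Set.insert_subset hx hKt)
  exact hK.2 hins (Finset.subset_insert x K) (Finset.mem_insert_self x K)

/-- Reachability in induced subgraphs is monotone in the vertex set. -/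
lemma reach_mono {W : Type*} (T : SimpleGraph W) {S₁ S₂ : Set W} (h : S₁ ⊆ S₂)
    {a b : S₁} (hr : (T.induce S₁).Reachable a b) :
    (T.induce S₂).Reachable ⟨a.1, h a.2⟩ ⟨b.1, h b.2⟩ :=
  hr.map (SimpleGraph.induceHom SimpleGraph.Hom.id h)

/-- If `G` is a finite chordal graph, `T` a clique tree of `G`, and
`X` a nonempty set of vertices with `G[X]` connected, then the maximal cliques meeting
`X` induce a connected subgraph (a subtree) of `T`. -/
theorem cliques_meeting_connected_set_induce_subtree {V : Type*} [Fintype V]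
    (G : SimpleGraph V) (hG : IsChordal G)
    (T : SimpleGraph {K : Finset V // Maximal G.IsClique (K : Set V)})
    (hT : IsCliqueTree G T)
    (X : Set V) (hXne : X.Nonempty) (hXconn : (G.induce X).Connected) :
    (T.induce {K | ∃ x ∈ X, x ∈ K.1}).Connected := by
  classical
  set S : Set {K : Finset V // Maximal G.IsClique (K : Set V)} :=
    {K | ∃ x ∈ X, x ∈ K.1} with hSdef
  have key : ∀ x, ∀ hx : x ∈ X, ∀ (K K' : {K : Finset V // Maximal G.IsClique (K : Set V)})
      (hK : x ∈ K.1) (hK' : x ∈ K'.1),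
      (T.induce S).Reachable ⟨K, ⟨x, hx, hK⟩⟩ ⟨K', ⟨x, hx, hK'⟩⟩ := by
    intro x hx K K' hK hK'
    have h1 : ({L | x ∈ L.1} : Set {K : Finset V // Maximal G.IsClique (K : Set V)}) ⊆ S :=
      fun L hL => ⟨x, hx, hL⟩
    exact reach_mono T h1 ((hT.2 x).preconnected ⟨K, hK⟩ ⟨K', hK'⟩)
  have main : ∀ {a b : X} (_ : (G.induce X).Walk a b),
      ∀ (K K' : {K : Finset V // Maximal G.IsClique (K : Set V)})
      (hK : a.1 ∈ K.1) (hK' : b.1 ∈ K'.1),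
      (T.induce S).Reachable ⟨K, ⟨a.1, a.2, hK⟩⟩ ⟨K', ⟨b.1, b.2, hK'⟩⟩ := by
    intro a b w
    induction w with
    | @nil u => intro K K' hK hK'; exact key u.1 u.2 K K' hK hK'
    | @cons u v b h p ih =>
      intro K K' hK hK'
      have hadj : G.Adj u.1 v.1 := h
      have hclique : G.IsClique (({u.1, v.1} : Finset V) : Set V) := by
        simp only [Finset.coe_insert, Finset.coe_singleton]
        exact SimpleGraph.isClique_pair.2 fun _ => hadj
      obtain ⟨K'', hK''⟩ := exists_max_clique ({u.1, v.1} : Finset V) hclique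
      have hu : u.1 ∈ K''.1 := hK'' (by simp)
      have hv : v.1 ∈ K''.1 := hK'' (by simp)
      exact (key u.1 u.2 K K'' hK hu).trans (ih K'' K' hv hK')
  rw [SimpleGraph.connected_iff]
  refine ⟨?_, ?_⟩
  · rintro ⟨K₁, hK₁⟩ ⟨K₂, hK₂⟩
    obtain ⟨x₁, hx₁, h1⟩ := hK₁
    obtain ⟨x₂, hx₂, h2⟩ := hK₂
    obtain ⟨w⟩ := hXconn.preconnected ⟨x₁, hx₁⟩ ⟨x₂, hx₂⟩
    exact main w K₁ K₂ h1 h2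
  · obtain ⟨x, hx⟩ := hXne
    have hclique : G.IsClique (({x} : Finset V) : Set V) := by simp
    obtain ⟨K, hK⟩ := exists_max_clique {x} hclique
    exact ⟨⟨K, ⟨x, hx, hK (by simp)⟩⟩⟩
end
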